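/- arXiv:1006.2403 — 5 statements merged into one kernel-verified Lean document; each statement's English description precedes it below -/
import Mathlib

section
/- Suppose the kernel T is irreducible (for all states x, y there exists n ≥ 0 such that the n-step transition probability from x to y is positive) and that π is a stationary probability distribution for T. Let R be a minimal nonnegative solution of the matrix equation A0 + R·A1 + R²·A2 = R; that is, R is a 2×2 real matrix with nonnegative entries satisfying the equation, and R ≤ S entrywise for every 2×2 real matrix S with nonnegative entries satisfying A0 + S·A1 + S²·A2 = S. Then the level distributions satisfy π_{q+1} = π_q · R for every q ≥ 1. -/
open Matrix

/-- The quasi-birth-death transition kernel on `{0,1} × ℕ` built from the boundary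
matrices `C1, C0` (level 0) and the level matrices `A2, A1, A0` (levels `q ≥ 1`). -/
noncomputable def qbdKernel (A0 A1 A2 C0 C1 : Matrix (Fin 2) (Fin 2) ℝ) :
    (Fin 2 × ℕ) → (Fin 2 × ℕ) → ℝ := fun x y =>
  if x.2 = 0 then
    (if y.2 = 0 then C1 x.1 y.1 else if y.2 = 1 then C0 x.1 y.1 else 0)
  else
    (if y.2 + 1 = x.2 then A2 x.1 y.1
     else if y.2 = x.2 then A1 x.1 y.1
     else if y.2 = x.2 + 1 then A0 x.1 y.1 else 0)

/-- `n`-step transition probabilities of a kernel on a countable state space. -/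
noncomputable def kernelPow (T : (Fin 2 × ℕ) → (Fin 2 × ℕ) → ℝ) :
    ℕ → (Fin 2 × ℕ) → (Fin 2 × ℕ) → ℝ
  | 0 => fun x y => if x = y then 1 else 0
  | n + 1 => fun x y => ∑' z : Fin 2 × ℕ, kernelPow T n x z * T z y

open Filter




section QBDAux

variable {A0 A1 A2 C0 C1 : Matrix (Fin 2) (Fin 2) ℝ}

lemma qbd_ker_nonneg (hA0 : ∀ c d, 0 ≤ A0 c d) (hA1 : ∀ c d, 0 ≤ A1 c d)
    (hA2 : ∀ c d, 0 ≤ A2 c d) (hC0 : ∀ c d, 0 ≤ C0 c d) (hC1 : ∀ c d, 0 ≤ C1 c d) :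
    ∀ x y, 0 ≤ qbdKernel A0 A1 A2 C0 C1 x y := by
  intro x y
  unfold qbdKernel
  split_ifs
  all_goals first
  | exact hA0 _ _
  | exact hA1 _ _
  | exact hA2 _ _
  | exact hC0 _ _
  | exact hC1 _ _
  | exact le_refl 0

lemma qbd_ker_le_one (hA0 : ∀ c d, 0 ≤ A0 c d) (hA1 : ∀ c d, 0 ≤ A1 c d)
    (hA2 : ∀ c d, 0 ≤ A2 c d) (hC0 : ∀ c d, 0 ≤ C0 c d) (hC1 : ∀ c d, 0 ≤ C1 c d)
    (hCrow : ∀ c, ∑ d, (C1 + C0) c d = 1) (hArow : ∀ c, ∑ d, (A2 + A1 + A0) c d = 1) :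
    ∀ x y, qbdKernel A0 A1 A2 C0 C1 x y ≤ 1 := by
  intro x y
  have hA := hArow x.1
  have hC := hCrow x.1
  simp only [Fin.sum_univ_two, Matrix.add_apply] at hA hC
  have h1 := hA0 x.1 0; have h2 := hA0 x.1 1
  have h3 := hA1 x.1 0; have h4 := hA1 x.1 1
  have h5 := hA2 x.1 0; have h6 := hA2 x.1 1
  have h7 := hC0 x.1 0; have h8 := hC0 x.1 1
  have h9 := hC1 x.1 0; have h10 := hC1 x.1 1
  unfold qbdKernel
  have hy : y.1 = 0 ∨ y.1 = 1 := by omega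
  split_ifs <;> rcases hy with hy | hy <;> (try rw [hy]) <;> linarith

lemma qbd_pow_nonneg (hT : ∀ x y, 0 ≤ qbdKernel A0 A1 A2 C0 C1 x y) :
    ∀ n x y, 0 ≤ kernelPow (qbdKernel A0 A1 A2 C0 C1) n x y := by
  intro n
  induction n with
  | zero => intro x y; simp only [kernelPow]; split_ifs <;> norm_num
  | succ n ih =>
    intro x y
    simp only [kernelPow]
    exact tsum_nonneg fun z => mul_nonneg (ih x z) (hT z y)

/-- If `S` is closed under positive transitions then `kernelPow` never leaves `S`. -/
lemma qbd_invariant (T : (Fin 2 × ℕ) → (Fin 2 × ℕ) → ℝ) (S : Set (Fin 2 × ℕ))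
    (hcl : ∀ x ∈ S, ∀ y, y ∉ S → T x y = 0) (x0 : Fin 2 × ℕ) (hx0 : x0 ∈ S) :
    ∀ n y, y ∉ S → kernelPow T n x0 y = 0 := by
  intro n
  induction n with
  | zero =>
    intro y hy
    simp only [kernelPow]
    split_ifs with h
    · exact absurd (h ▸ hx0) hy
    · rfl
  | succ n ih =>
    intro y hy
    simp only [kernelPow]
    have : ∀ z : Fin 2 × ℕ, kernelPow T n x0 z * T z y = 0 := by
      intro z
      by_cases hz : z ∈ S
      · rw [hcl z hz y hy, mul_zero]
      · rw [ih z hz, zero_mul]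
    simp only [this, tsum_zero]

end QBDAux



lemma qbd_pi_pow_le (T : (Fin 2 × ℕ) → (Fin 2 × ℕ) → ℝ)
    (hT0 : ∀ x y, 0 ≤ T x y) (hT1 : ∀ x y, T x y ≤ 1)
    (hP0 : ∀ n x y, 0 ≤ kernelPow T n x y)
    (π : Fin 2 × ℕ → ℝ) (hπ0 : ∀ x, 0 ≤ π x) (hπs : Summable π)
    (hstat : ∀ y, ∑' x : Fin 2 × ℕ, π x * T x y = π y) :
    ∀ n x0 y, π x0 * kernelPow T n x0 y ≤ π y := by
  intro n
  induction n with
  | zero =>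
    intro x0 y
    simp only [kernelPow]
    split_ifs with h
    · rw [h, mul_one]
    · rw [mul_zero]; exact hπ0 y
  | succ n ih =>
    intro x0 y
    simp only [kernelPow]
    rw [← tsum_mul_left]
    calc ∑' z, π x0 * (kernelPow T n x0 z * T z y)
        ≤ ∑' z, π z * T z y := by
          apply Summable.tsum_le_tsum
          · intro z
            rw [← mul_assoc]
            exact mul_le_mul_of_nonneg_right (ih x0 z) (hT0 z y)
          · apply Summable.of_nonneg_of_le
              (fun z => mul_nonneg (hπ0 x0) (mul_nonneg (hP0 n x0 z) (hT0 z y)))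
              (fun z => ?_) hπs
            rw [← mul_assoc]
            calc π x0 * kernelPow T n x0 z * T z y ≤ π z * T z y :=
                  mul_le_mul_of_nonneg_right (ih x0 z) (hT0 z y)
              _ ≤ π z * 1 := mul_le_mul_of_nonneg_left (hT1 z y) (hπ0 z)
              _ = π z := mul_one _
          · apply Summable.of_nonneg_of_le
              (fun z => mul_nonneg (hπ0 z) (hT0 z y)) (fun z => ?_) hπs
            calc π z * T z y ≤ π z * 1 := mul_le_mul_of_nonneg_left (hT1 z y) (hπ0 z)
              _ = π z := mul_one _
      _ = π y := hstat y

lemma qbd_pi_pos (T : (Fin 2 × ℕ) → (Fin 2 × ℕ) → ℝ)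
    (hT0 : ∀ x y, 0 ≤ T x y) (hT1 : ∀ x y, T x y ≤ 1)
    (hP0 : ∀ n x y, 0 ≤ kernelPow T n x y)
    (hirr : ∀ x y : Fin 2 × ℕ, ∃ n : ℕ, 0 < kernelPow T n x y)
    (π : Fin 2 × ℕ → ℝ) (hπ0 : ∀ x, 0 ≤ π x) (hπ1 : HasSum π 1)
    (hstat : ∀ y, ∑' x : Fin 2 × ℕ, π x * T x y = π y) :
    ∀ y, 0 < π y := by
  obtain ⟨x0, hx0⟩ : ∃ x0, 0 < π x0 := by
    by_contra h
    push_neg at h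
    have hz : π = 0 := funext fun x => le_antisymm (h x) (hπ0 x)
    rw [hz] at hπ1
    have : (1:ℝ) = 0 := hπ1.unique hasSum_zero
    norm_num at this
  intro y
  obtain ⟨n, hn⟩ := hirr x0 y
  calc (0:ℝ) < π x0 * kernelPow T n x0 y := mul_pos hx0 hn
    _ ≤ π y := qbd_pi_pow_le T hT0 hT1 hP0 π hπ0 hπ1.summable hstat n x0 y



section C
variable {A0 A1 A2 C0 C1 : Matrix (Fin 2) (Fin 2) ℝ}

lemma qbd_ker_eval (c d : Fin 2) (l m : ℕ) (hl : l ≠ 0) :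
    qbdKernel A0 A1 A2 C0 C1 (c, l) (d, m) =
      if m + 1 = l then A2 c d else if m = l then A1 c d
      else if m = l + 1 then A0 c d else 0 := by
  simp [qbdKernel, hl]

lemma qbd_balance {π : Fin 2 × ℕ → ℝ}
    (hstat : ∀ y, ∑' x : Fin 2 × ℕ, π x * qbdKernel A0 A1 A2 C0 C1 x y = π y)
    (q : ℕ) (hq : 1 ≤ q) (d : Fin 2) :
    π (d, q + 1) = (∑ c, π (c, q) * A0 c d) + (∑ c, π (c, q + 1) * A1 c d)
      + (∑ c, π (c, q + 2) * A2 c d) := by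
  have key := hstat (d, q + 1)
  rw [tsum_eq_sum (s := (Finset.univ : Finset (Fin 2)) ×ˢ ({q, q+1, q+2} : Finset ℕ))] at key
  · rw [Finset.sum_product] at key
    have e0 : ∀ c : Fin 2, qbdKernel A0 A1 A2 C0 C1 (c, q) (d, q + 1) = A0 c d := by
      intro c
      rw [qbd_ker_eval c d q (q+1) (by omega), if_neg (by omega), if_neg (by omega),
        if_pos rfl]
    have e1 : ∀ c : Fin 2, qbdKernel A0 A1 A2 C0 C1 (c, q+1) (d, q + 1) = A1 c d := by
      intro c
      rw [qbd_ker_eval c d (q+1) (q+1) (by omega), if_neg (by omega), if_pos rfl]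
    have e2 : ∀ c : Fin 2, qbdKernel A0 A1 A2 C0 C1 (c, q+2) (d, q + 1) = A2 c d := by
      intro c
      rw [qbd_ker_eval c d (q+2) (q+1) (by omega), if_pos rfl]
    have hqs : ∀ c : Fin 2, ∑ l ∈ ({q, q+1, q+2} : Finset ℕ),
        π (c, l) * qbdKernel A0 A1 A2 C0 C1 (c, l) (d, q+1)
        = π (c, q) * A0 c d + π (c, q+1) * A1 c d + π (c, q+2) * A2 c d := by
      intro c
      rw [Finset.sum_insert (by simp), Finset.sum_insert (by simp),
        Finset.sum_singleton, e0, e1, e2]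
      ring
    rw [Fin.sum_univ_two] at key
    rw [hqs 0, hqs 1] at key
    rw [← key, Fin.sum_univ_two, Fin.sum_univ_two, Fin.sum_univ_two]
    ring
  · intro x hx
    obtain ⟨c, l⟩ := x
    simp only [Finset.mem_product, Finset.mem_univ, true_and, Finset.mem_insert,
      Finset.mem_singleton] at hx
    push_neg at hx
    obtain ⟨hl1, hl2, hl3⟩ := hx
    by_cases hl0 : l = 0
    · subst hl0
      have h1 : q + 1 ≠ 0 := by omega
      have h2 : q + 1 ≠ 1 := by omega
      simp [qbdKernel, h1, h2]
      intro h; exact absurd h.symm hl1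
    · rw [qbd_ker_eval c d l (q+1) hl0, if_neg (by omega), if_neg (by omega),
        if_neg (by omega), mul_zero]
end C


section D
variable {A0 A1 A2 : Matrix (Fin 2) (Fin 2) ℝ}

/-- entrywise product bound -/
lemma qbd_mul_le {S S' X X' : Matrix (Fin 2) (Fin 2) ℝ}
    (hS0 : ∀ i j, 0 ≤ S i j) (hSS : ∀ i j, S i j ≤ S' i j)
    (hX0 : ∀ i j, 0 ≤ X i j) (hXX : ∀ i j, X i j ≤ X' i j) :
    ∀ i j, (S * X) i j ≤ (S' * X') i j := by
  intro i j
  rw [Matrix.mul_apply, Matrix.mul_apply]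
  apply Finset.sum_le_sum
  intro m _
  exact mul_le_mul (hSS i m) (hXX m j) (hX0 m j) (le_trans (hS0 i m) (hSS i m))

lemma qbd_mul_nonneg {S X : Matrix (Fin 2) (Fin 2) ℝ}
    (hS0 : ∀ i j, 0 ≤ S i j) (hX0 : ∀ i j, 0 ≤ X i j) :
    ∀ i j, 0 ≤ (S * X) i j := by
  intro i j
  rw [Matrix.mul_apply]
  exact Finset.sum_nonneg fun m _ => mul_nonneg (hS0 i m) (hX0 m j)

noncomputable def qbdF (A0 A1 A2 : Matrix (Fin 2) (Fin 2) ℝ)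
    (S : Matrix (Fin 2) (Fin 2) ℝ) : Matrix (Fin 2) (Fin 2) ℝ :=
  A0 + S * A1 + S ^ 2 * A2

noncomputable def qbdRs (A0 A1 A2 : Matrix (Fin 2) (Fin 2) ℝ) : ℕ → Matrix (Fin 2) (Fin 2) ℝ :=
  fun k => (qbdF A0 A1 A2)^[k] 0

lemma qbdRs_succ (k : ℕ) : qbdRs A0 A1 A2 (k + 1) = qbdF A0 A1 A2 (qbdRs A0 A1 A2 k) := by
  simp [qbdRs, Function.iterate_succ_apply']

lemma qbd_F_mono (hA1 : ∀ c d, 0 ≤ A1 c d) (hA2 : ∀ c d, 0 ≤ A2 c d)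
    {S S' : Matrix (Fin 2) (Fin 2) ℝ}
    (hS0 : ∀ i j, 0 ≤ S i j) (hSS : ∀ i j, S i j ≤ S' i j) :
    ∀ i j, qbdF A0 A1 A2 S i j ≤ qbdF A0 A1 A2 S' i j := by
  intro i j
  have hS'0 : ∀ i j, 0 ≤ S' i j := fun i j => le_trans (hS0 i j) (hSS i j)
  have h1 : (S * A1) i j ≤ (S' * A1) i j :=
    qbd_mul_le hS0 hSS hA1 (fun _ _ => le_refl _) i j
  have h2 : (S ^ 2 * A2) i j ≤ (S' ^ 2 * A2) i j := by
    rw [pow_two, pow_two, Matrix.mul_assoc, Matrix.mul_assoc]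
    exact qbd_mul_le hS0 hSS (qbd_mul_nonneg hS0 hA2)
      (qbd_mul_le hS0 hSS hA2 (fun _ _ => le_refl _)) i j
  simp only [qbdF, Matrix.add_apply]
  linarith

lemma qbd_F_nonneg (hA0 : ∀ c d, 0 ≤ A0 c d) (hA1 : ∀ c d, 0 ≤ A1 c d)
    (hA2 : ∀ c d, 0 ≤ A2 c d) {S : Matrix (Fin 2) (Fin 2) ℝ} (hS0 : ∀ i j, 0 ≤ S i j) :
    ∀ i j, 0 ≤ qbdF A0 A1 A2 S i j := by
  intro i j
  have h2 : 0 ≤ (S ^ 2 * A2) i j := by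
    rw [pow_two, Matrix.mul_assoc]
    exact qbd_mul_nonneg hS0 (qbd_mul_nonneg hS0 hA2) i j
  simp only [qbdF, Matrix.add_apply]
  have := hA0 i j
  have := qbd_mul_nonneg hS0 hA1 i j
  linarith

lemma qbdRs_nonneg (hA0 : ∀ c d, 0 ≤ A0 c d) (hA1 : ∀ c d, 0 ≤ A1 c d)
    (hA2 : ∀ c d, 0 ≤ A2 c d) : ∀ k i j, 0 ≤ qbdRs A0 A1 A2 k i j := by
  intro k
  induction k with
  | zero => intro i j; simp [qbdRs]
  | succ k ih => rw [qbdRs_succ]; exact qbd_F_nonneg hA0 hA1 hA2 ih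

lemma qbdRs_le_R (hA0 : ∀ c d, 0 ≤ A0 c d) (hA1 : ∀ c d, 0 ≤ A1 c d)
    (hA2 : ∀ c d, 0 ≤ A2 c d) {R : Matrix (Fin 2) (Fin 2) ℝ}
    (hR0 : ∀ i j, 0 ≤ R i j) (hReq : A0 + R * A1 + R ^ 2 * A2 = R) :
    ∀ k i j, qbdRs A0 A1 A2 k i j ≤ R i j := by
  intro k
  induction k with
  | zero => intro i j; simpa [qbdRs] using hR0 i j
  | succ k ih =>
    intro i j
    rw [qbdRs_succ]
    calc qbdF A0 A1 A2 (qbdRs A0 A1 A2 k) i j ≤ qbdF A0 A1 A2 R i j :=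
          qbd_F_mono hA1 hA2 (qbdRs_nonneg hA0 hA1 hA2 k) ih i j
      _ = R i j := by rw [qbdF, hReq]

lemma qbdRs_mono (hA0 : ∀ c d, 0 ≤ A0 c d) (hA1 : ∀ c d, 0 ≤ A1 c d)
    (hA2 : ∀ c d, 0 ≤ A2 c d) :
    ∀ k i j, qbdRs A0 A1 A2 k i j ≤ qbdRs A0 A1 A2 (k + 1) i j := by
  intro k
  induction k with
  | zero =>
    intro i j
    rw [qbdRs_succ]
    have h0 : qbdRs A0 A1 A2 0 i j = 0 := by simp [qbdRs]
    rw [h0]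
    exact qbd_F_nonneg hA0 hA1 hA2 (by intro i j; simp [qbdRs]) i j
  | succ k ih =>
    intro i j
    rw [qbdRs_succ, qbdRs_succ]
    exact qbd_F_mono hA1 hA2 (qbdRs_nonneg hA0 hA1 hA2 k) ih i j

/-- entrywise limits of matrix sequences multiply -/
lemma qbd_tendsto_mul {f g : ℕ → Matrix (Fin 2) (Fin 2) ℝ} {F G : Matrix (Fin 2) (Fin 2) ℝ}
    (hf : ∀ i j, Tendsto (fun k => f k i j) atTop (nhds (F i j)))
    (hg : ∀ i j, Tendsto (fun k => g k i j) atTop (nhds (G i j))) :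
    ∀ i j, Tendsto (fun k => (f k * g k) i j) atTop (nhds ((F * G) i j)) := by
  intro i j
  simp only [Matrix.mul_apply]
  exact tendsto_finset_sum _ fun m _ => (hf i m).mul (hg m j)

lemma qbd_R_is_limit
    (hA0 : ∀ c d, 0 ≤ A0 c d) (hA1 : ∀ c d, 0 ≤ A1 c d) (hA2 : ∀ c d, 0 ≤ A2 c d)
    {R : Matrix (Fin 2) (Fin 2) ℝ}
    (hR0 : ∀ i j, 0 ≤ R i j) (hReq : A0 + R * A1 + R ^ 2 * A2 = R)
    (hRmin : ∀ S : Matrix (Fin 2) (Fin 2) ℝ, (∀ i j, 0 ≤ S i j) →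
      A0 + S * A1 + S ^ 2 * A2 = S → ∀ i j, R i j ≤ S i j) :
    ∀ i j, Tendsto (fun k => qbdRs A0 A1 A2 k i j) atTop (nhds (R i j)) := by
  classical
  set L : Matrix (Fin 2) (Fin 2) ℝ := fun i j => ⨆ k, qbdRs A0 A1 A2 k i j with hL
  have hmono : ∀ i j, Monotone (fun k => qbdRs A0 A1 A2 k i j) := by
    intro i j
    apply monotone_nat_of_le_succ
    intro k
    exact qbdRs_mono hA0 hA1 hA2 k i j
  have hbdd : ∀ i j, BddAbove (Set.range fun k => qbdRs A0 A1 A2 k i j) := by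
    intro i j
    refine ⟨R i j, ?_⟩
    rintro x ⟨k, rfl⟩
    exact qbdRs_le_R hA0 hA1 hA2 hR0 hReq k i j
  have htend : ∀ i j, Tendsto (fun k => qbdRs A0 A1 A2 k i j) atTop (nhds (L i j)) :=
    fun i j => tendsto_atTop_ciSup (hmono i j) (hbdd i j)
  -- L satisfies the fixed point equation
  have hLfix : A0 + L * A1 + L ^ 2 * A2 = L := by
    have h1 : ∀ i j, Tendsto (fun k => qbdRs A0 A1 A2 (k+1) i j) atTop (nhds (L i j)) := by
      intro i j
      exact (htend i j).comp (tendsto_add_atTop_nat 1)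
    have h2 : ∀ i j, Tendsto (fun k => qbdF A0 A1 A2 (qbdRs A0 A1 A2 k) i j) atTop
        (nhds ((A0 + L * A1 + L ^ 2 * A2) i j)) := by
      intro i j
      have hmul1 := qbd_tendsto_mul (g := fun _ => A1) (G := A1) htend
        (fun i j => tendsto_const_nhds) i j
      have hsq : ∀ i j, Tendsto (fun k => (qbdRs A0 A1 A2 k * qbdRs A0 A1 A2 k) i j)
          atTop (nhds ((L * L) i j)) := qbd_tendsto_mul htend htend
      have hmul2 := qbd_tendsto_mul (f := fun k => qbdRs A0 A1 A2 k * qbdRs A0 A1 A2 k)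
        (g := fun _ => A2) (G := A2) hsq (fun i j => tendsto_const_nhds) i j
      have : Tendsto (fun k => A0 i j + (qbdRs A0 A1 A2 k * A1) i j
          + (qbdRs A0 A1 A2 k * qbdRs A0 A1 A2 k * A2) i j) atTop
          (nhds (A0 i j + (L * A1) i j + (L * L * A2) i j)) :=
        (tendsto_const_nhds.add hmul1).add hmul2
      simp only [qbdF, Matrix.add_apply, pow_two]
      exact this
    funext i; ext j
    have hu : Tendsto (fun k => qbdRs A0 A1 A2 (k+1) i j) atTop
        (nhds ((A0 + L * A1 + L ^ 2 * A2) i j)) := by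
      have := h2 i j
      simp only [← qbdRs_succ] at this
      exact this
    have := tendsto_nhds_unique hu (h1 i j)
    rw [Matrix.add_apply, Matrix.add_apply] at this ⊢
    linarith [this]
  have hL0 : ∀ i j, 0 ≤ L i j := by
    intro i j
    exact le_ciSup_of_le (hbdd i j) 0 (by simpa [qbdRs] using le_refl (0:ℝ))
  have hLR : L = R := by
    funext i; ext j
    have h1 : R i j ≤ L i j := hRmin L hL0 hLfix i j
    have h2 : L i j ≤ R i j :=
      ciSup_le fun k => qbdRs_le_R hA0 hA1 hA2 hR0 hReq k i j
    linarith
  intro i j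
  rw [← hLR]
  exact htend i j
end D


section E
variable {R : Matrix (Fin 2) (Fin 2) ℝ}

lemma qbd_vecMul_apply (u : Fin 2 → ℝ) (M : Matrix (Fin 2) (Fin 2) ℝ) (d : Fin 2) :
    (u ᵥ* M) d = ∑ c, u c * M c d := rfl

lemma qbd_vecMul_nonneg {u : Fin 2 → ℝ} (hu : ∀ c, 0 ≤ u c)
    {M : Matrix (Fin 2) (Fin 2) ℝ} (hM : ∀ i j, 0 ≤ M i j) :
    ∀ d, 0 ≤ (u ᵥ* M) d := fun d => by
  rw [qbd_vecMul_apply]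
  exact Finset.sum_nonneg fun c _ => mul_nonneg (hu c) (hM c d)

lemma qbd_vecMul_le {u u' : Fin 2 → ℝ} (huu : ∀ c, u c ≤ u' c)
    {M : Matrix (Fin 2) (Fin 2) ℝ} (hM : ∀ i j, 0 ≤ M i j) :
    ∀ d, (u ᵥ* M) d ≤ (u' ᵥ* M) d := fun d => by
  rw [qbd_vecMul_apply, qbd_vecMul_apply]
  exact Finset.sum_le_sum fun c _ => mul_le_mul_of_nonneg_right (huu c) (hM c d)

lemma qbd_vecMul_mono {u : Fin 2 → ℝ} (hu : ∀ c, 0 ≤ u c)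
    {M M' : Matrix (Fin 2) (Fin 2) ℝ} (hMM : ∀ i j, M i j ≤ M' i j) :
    ∀ d, (u ᵥ* M) d ≤ (u ᵥ* M') d := fun d => by
  rw [qbd_vecMul_apply, qbd_vecMul_apply]
  exact Finset.sum_le_sum fun c _ => mul_le_mul_of_nonneg_left (hMM c d) (hu c)

/-- If `v = R v` and `R^k → 0` entrywise then `v = 0`. -/
lemma qbd_fixed_vec_zero
    (hRk : ∀ c d, Tendsto (fun k => (R ^ k) c d) atTop (nhds 0))
    {v : Fin 2 → ℝ} (hv : ∀ c, v c = ∑ e, R c e * v e) : ∀ c, v c = 0 := by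
  have hiter : ∀ k c, v c = ∑ e, (R ^ k) c e * v e := by
    intro k
    induction k with
    | zero => intro c; simp [Matrix.one_apply, Finset.sum_ite_eq]
    | succ k ih =>
      intro c
      calc v c = ∑ e, R c e * v e := hv c
        _ = ∑ e, R c e * (∑ f, (R ^ k) e f * v f) := by
            apply Finset.sum_congr rfl; intro e _; rw [← ih e]
        _ = ∑ f, (∑ e, R c e * (R ^ k) e f) * v f := by
            simp only [Fin.sum_univ_two]; ring
        _ = ∑ f, (R ^ (k+1)) c f * v f := by
            apply Finset.sum_congr rfl; intro f _
            rw [pow_succ', Matrix.mul_apply]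
  intro c
  have h1 : Tendsto (fun k => ∑ e, (R ^ k) c e * v e) atTop (nhds 0) := by
    have : Tendsto (fun k => ∑ e, (R ^ k) c e * v e) atTop (nhds (∑ e : Fin 2, 0 * v e)) :=
      tendsto_finset_sum _ fun e _ => (hRk c e).mul_const (v e)
    simpa using this
  have h2 : Tendsto (fun _ : ℕ => v c) atTop (nhds (v c)) := tendsto_const_nhds
  have : (fun k : ℕ => v c) = fun k => ∑ e, (R ^ k) c e * v e := funext fun k => hiter k c
  rw [this] at h2
  exact tendsto_nhds_unique h2 h1

/-- row sums identity: `A0 𝟙 = R A2 𝟙`. -/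
lemma qbd_star {A0 A1 A2 : Matrix (Fin 2) (Fin 2) ℝ}
    (hArow : ∀ c, ∑ d, (A2 + A1 + A0) c d = 1)
    (hReq : A0 + R * A1 + R ^ 2 * A2 = R)
    (hRk : ∀ c d, Tendsto (fun k => (R ^ k) c d) atTop (nhds 0)) :
    ∀ c, ∑ d, A0 c d = ∑ e, R c e * (∑ d, A2 e d) := by
  have hent : ∀ c d, A0 c d + (R * A1) c d + ((R * R) * A2) c d = R c d := by
    intro c d
    conv_rhs => rw [← hReq]
    simp [Matrix.add_apply, pow_two]
  set v : Fin 2 → ℝ := fun c => (∑ d, A0 c d) - ∑ e, R c e * (∑ d, A2 e d) with hvdef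
  have hv : ∀ c, v c = ∑ e, R c e * v e := by
    intro c
    have h0 := hent c 0
    have h1 := hent c 1
    have ha0 := hArow 0
    have ha1 := hArow 1
    simp only [Matrix.mul_apply, Matrix.add_apply, Fin.sum_univ_two] at h0 h1 ha0 ha1
    simp only [hvdef, Fin.sum_univ_two]
    linear_combination h0 + h1 - R c 0 * ha0 - R c 1 * ha1
  have := qbd_fixed_vec_zero hRk hv
  intro c
  have hc := this c
  simp only [hvdef] at hc
  linarith
end E



section F
variable {A0 A1 A2 C0 C1 R : Matrix (Fin 2) (Fin 2) ℝ} {π : Fin 2 × ℕ → ℝ}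


noncomputable def qbdDelta (π : Fin 2 × ℕ → ℝ) (R : Matrix (Fin 2) (Fin 2) ℝ)
    (q : ℕ) (d : Fin 2) : ℝ := π (d, q + 1) - ∑ c, π (c, q) * R c d

lemma qbd_pi_summable (hπs : Summable π) (e : Fin 2) (m : ℕ) :
    Summable fun k => π (e, m + k) := by
  have hinj : Function.Injective (fun k : ℕ => ((e, m + k) : Fin 2 × ℕ)) := by
    intro a b h
    simp only [Prod.mk.injEq] at h
    omega
  exact hπs.comp_injective hinj

lemma qbd_delta_summable (hπs : Summable π) (q : ℕ) (c : Fin 2) :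
    Summable fun k => qbdDelta π R (q + k) c := by
  have h1 : Summable fun k => π (c, (q + k) + 1) := by
    have := qbd_pi_summable hπs c (q + 1)
    apply this.congr
    intro k
    have h : q + 1 + k = q + k + 1 := by omega
    rw [h]
  have h2 : ∀ e : Fin 2, Summable fun k => π (e, q + k) * R e c :=
    fun e => (qbd_pi_summable hπs e q).mul_right _
  have : Summable fun k => π (c, (q + k) + 1) - (π (0, q + k) * R 0 c + π (1, q + k) * R 1 c) :=
    h1.sub ((h2 0).add (h2 1))
  apply this.congr
  intro k
  simp [qbdDelta, Fin.sum_univ_two]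

/-- The fundamental recursion satisfied by the defect vectors `δ_q`. -/
lemma qbd_delta_rel
    (hstat : ∀ y, ∑' x : Fin 2 × ℕ, π x * qbdKernel A0 A1 A2 C0 C1 x y = π y)
    (hbal : ∀ q, 1 ≤ q → ∀ d, π (d, q + 1) = (∑ c, π (c, q) * A0 c d)
      + (∑ c, π (c, q + 1) * A1 c d) + (∑ c, π (c, q + 2) * A2 c d))
    (hReq : A0 + R * A1 + R ^ 2 * A2 = R)
    (q : ℕ) (hq : 1 ≤ q) (d : Fin 2) :
    qbdDelta π R q d = (∑ c, qbdDelta π R q c * A1 c d)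
      + (∑ c, qbdDelta π R q c * (R * A2) c d)
      + (∑ c, qbdDelta π R (q + 1) c * A2 c d) := by
  have hent : ∀ c d, A0 c d + (R * A1) c d + ((R * R) * A2) c d = R c d := by
    intro c d
    conv_rhs => rw [← hReq]
    simp [Matrix.add_apply, pow_two]
  have hb := hbal q hq d
  have he0 := hent 0 d
  have he1 := hent 1 d
  simp only [qbdDelta, Matrix.mul_apply, Fin.sum_univ_two] at hb he0 he1 ⊢
  linear_combination hb + π (0, q) * he0 + π (1, q) * he1

end F


section G
variable {A1 A2 A0 R : Matrix (Fin 2) (Fin 2) ℝ} {π : Fin 2 × ℕ → ℝ}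


lemma qbd_deltaA2_zero
    (hsum : ∀ (q : ℕ) (c : Fin 2), Summable fun k => qbdDelta π R (q + k) c)
    (hrel : ∀ q, 1 ≤ q → ∀ d, qbdDelta π R q d = (∑ c, qbdDelta π R q c * A1 c d)
      + (∑ c, qbdDelta π R q c * (R * A2) c d)
      + (∑ c, qbdDelta π R (q + 1) c * A2 c d))
    (hstar : ∀ c, ∑ d, A0 c d = ∑ e, R c e * (∑ d, A2 e d))
    (hArow : ∀ c, ∑ d, (A2 + A1 + A0) c d = 1)
    (hδ0 : ∀ q, 1 ≤ q → ∀ c, 0 ≤ qbdDelta π R q c)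
    (hA2nn : ∀ c d, 0 ≤ A2 c d)
    (q : ℕ) (hq : 1 ≤ q) : ∀ c d, qbdDelta π R q c * A2 c d = 0 := by
  set s : Fin 2 → ℝ := fun c => ∑' k, qbdDelta π R (q + k) c with hs_def
  have hshift: ∀ c, HasSum (fun k => qbdDelta π R (q + k + 1) c)
      (s c - qbdDelta π R q c) := by
    intro c
    have hS : Summable fun k => qbdDelta π R (q + k + 1) c := by
      have := hsum (q+1) c
      apply this.congr
      intro k
      have h : q + 1 + k = q + k + 1 := by omega
      rw [h]
    have h := Summable.tsum_eq_zero_add (hsum q c)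
    have h' : ∑' (b:ℕ), qbdDelta π R (q + (b + 1)) c = ∑' (b:ℕ), qbdDelta π R (q + b + 1) c :=
      tsum_congr fun b => rfl
    rw [h'] at h
    have h2 : ∑' (b:ℕ), qbdDelta π R (q + b + 1) c = s c - qbdDelta π R q c := by
      rw [hs_def]
      simp only
      have h0 : qbdDelta π R (q + 0) c = qbdDelta π R q c := rfl
      rw [h0] at h
      linarith
    rw [← h2]
    exact hS.hasSum
  have hs : ∀ d, s d = (s 0 * A1 0 d + s 1 * A1 1 d)
      + (s 0 * (R * A2) 0 d + s 1 * (R * A2) 1 d)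
      + ((s 0 - qbdDelta π R q 0) * A2 0 d + (s 1 - qbdDelta π R q 1) * A2 1 d) := by
    intro d
    have hrw : ∀ k : ℕ, qbdDelta π R (q + k) d =
        (qbdDelta π R (q + k) 0 * A1 0 d + qbdDelta π R (q + k) 1 * A1 1 d)
        + (qbdDelta π R (q + k) 0 * (R * A2) 0 d + qbdDelta π R (q + k) 1 * (R * A2) 1 d)
        + (qbdDelta π R (q + k + 1) 0 * A2 0 d + qbdDelta π R (q + k + 1) 1 * A2 1 d) := by
      intro k
      have := hrel (q + k) (by omega) d
      simpa [Fin.sum_univ_two] using this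
    have H0 : HasSum (fun k => qbdDelta π R (q + k) 0) (s 0) := (hsum q 0).hasSum
    have H1 : HasSum (fun k => qbdDelta π R (q + k) 1) (s 1) := (hsum q 1).hasSum
    have Hbig : HasSum (fun k =>
        (qbdDelta π R (q + k) 0 * A1 0 d + qbdDelta π R (q + k) 1 * A1 1 d)
        + (qbdDelta π R (q + k) 0 * (R * A2) 0 d + qbdDelta π R (q + k) 1 * (R * A2) 1 d)
        + (qbdDelta π R (q + k + 1) 0 * A2 0 d + qbdDelta π R (q + k + 1) 1 * A2 1 d))
        ((s 0 * A1 0 d + s 1 * A1 1 d)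
        + (s 0 * (R * A2) 0 d + s 1 * (R * A2) 1 d)
        + ((s 0 - qbdDelta π R q 0) * A2 0 d + (s 1 - qbdDelta π R q 1) * A2 1 d)) :=
      (((H0.mul_right _).add (H1.mul_right _)).add
        ((H0.mul_right _).add (H1.mul_right _))).add
        (((hshift 0).mul_right _).add ((hshift 1).mul_right _))
    calc s d = ∑' k, qbdDelta π R (q + k) d := rfl
      _ = _ := by rw [tsum_congr hrw, Hbig.tsum_eq]
  have key : qbdDelta π R q 0 * A2 0 0 + qbdDelta π R q 0 * A2 0 1
      + qbdDelta π R q 1 * A2 1 0 + qbdDelta π R q 1 * A2 1 1 = 0 := by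
    have h0 := hs 0
    have h1 := hs 1
    have ha0 := hArow 0
    have ha1 := hArow 1
    have hst0 := hstar 0
    have hst1 := hstar 1
    simp only [Matrix.mul_apply, Matrix.add_apply, Fin.sum_univ_two] at h0 h1 ha0 ha1 hst0 hst1
    linear_combination h0 + h1 + s 0 * ha0 + s 1 * ha1 - s 0 * hst0 - s 1 * hst1
  have hnn : ∀ c d, 0 ≤ qbdDelta π R q c * A2 c d :=
    fun c d => mul_nonneg (hδ0 q hq c) (hA2nn c d)
  intro c d
  have h00 := hnn 0 0
  have h01 := hnn 0 1
  have h10 := hnn 1 0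
  have h11 := hnn 1 1
  have hc : c = 0 ∨ c = 1 := by omega
  have hd : d = 0 ∨ d = 1 := by omega
  rcases hc with rfl | rfl <;> rcases hd with rfl | rfl <;> linarith
end G





section I
variable {A0 A1 A2 R : Matrix (Fin 2) (Fin 2) ℝ} {π : Fin 2 × ℕ → ℝ}




lemma qbd_pi_Rs_le
    (hA0 : ∀ c d, 0 ≤ A0 c d) (hA1 : ∀ c d, 0 ≤ A1 c d) (hA2 : ∀ c d, 0 ≤ A2 c d)
    (hRs0 : ∀ k i j, 0 ≤ qbdRs A0 A1 A2 k i j)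
    (hπ0 : ∀ x, 0 ≤ π x)
    (hbal : ∀ q, 1 ≤ q → ∀ d, π (d, q + 1) = (∑ c, π (c, q) * A0 c d)
      + (∑ c, π (c, q + 1) * A1 c d) + (∑ c, π (c, q + 2) * A2 c d)) :
    ∀ k q, 1 ≤ q → ∀ d, ((fun c => π (c, q)) ᵥ* qbdRs A0 A1 A2 k) d ≤ π (d, q + 1) := by
  intro k
  induction k with
  | zero =>
    intro q hq d
    have h0 : qbdRs A0 A1 A2 0 = 0 := rfl
    rw [h0, Matrix.vecMul_zero]
    exact hπ0 _
  | succ k ih =>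
    intro q hq d
    rw [qbdRs_succ]
    have hexp : ((fun c => π (c, q)) ᵥ* qbdF A0 A1 A2 (qbdRs A0 A1 A2 k)) d
        = ((fun c => π (c, q)) ᵥ* A0) d
        + ((((fun c => π (c, q)) ᵥ* qbdRs A0 A1 A2 k)) ᵥ* A1) d
        + (((((fun c => π (c, q)) ᵥ* qbdRs A0 A1 A2 k)) ᵥ* qbdRs A0 A1 A2 k) ᵥ* A2) d := by
      rw [qbdF, Matrix.vecMul_add, Matrix.vecMul_add, pow_two, Matrix.mul_assoc,
        Matrix.vecMul_vecMul, Matrix.vecMul_vecMul, Matrix.vecMul_vecMul]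
      simp [Pi.add_apply]
    rw [hexp]
    have h1 : ((((fun c => π (c, q)) ᵥ* qbdRs A0 A1 A2 k)) ᵥ* A1) d
        ≤ ((fun c => π (c, q + 1)) ᵥ* A1) d :=
      qbd_vecMul_le (fun c => ih q hq c) hA1 d
    have h2 : (((((fun c => π (c, q)) ᵥ* qbdRs A0 A1 A2 k)) ᵥ* qbdRs A0 A1 A2 k) ᵥ* A2) d
        ≤ ((fun c => π (c, q + 2)) ᵥ* A2) d := by
      have hstep : ∀ c, ((((fun c => π (c, q)) ᵥ* qbdRs A0 A1 A2 k)) ᵥ* qbdRs A0 A1 A2 k) c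
          ≤ π (c, q + 2) := by
        intro c
        calc ((((fun c => π (c, q)) ᵥ* qbdRs A0 A1 A2 k)) ᵥ* qbdRs A0 A1 A2 k) c
            ≤ ((fun c => π (c, q + 1)) ᵥ* qbdRs A0 A1 A2 k) c :=
              qbd_vecMul_le (fun c => ih q hq c) (hRs0 k) c
          _ ≤ π (c, q + 2) := ih (q + 1) (by omega) c
      exact qbd_vecMul_le hstep hA2 d
    have hb := hbal q hq d
    rw [qbd_vecMul_apply, qbd_vecMul_apply, qbd_vecMul_apply] at *
    linarith
  done

lemma qbd_pi_R_le
    (hR0 : ∀ i j, 0 ≤ R i j)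
    (hRlim : ∀ i j, Tendsto (fun k => qbdRs A0 A1 A2 k i j) atTop (nhds (R i j)))
    (hRs : ∀ k q, 1 ≤ q → ∀ d, ((fun c => π (c, q)) ᵥ* qbdRs A0 A1 A2 k) d ≤ π (d, q + 1)) :
    ∀ q, 1 ≤ q → ∀ d, (∑ c, π (c, q) * R c d) ≤ π (d, q + 1) := by
  intro q hq d
  have ht : Tendsto (fun k => ∑ c, π (c, q) * qbdRs A0 A1 A2 k c d) atTop
      (nhds (∑ c, π (c, q) * R c d)) :=
    tendsto_finset_sum _ fun c _ => tendsto_const_nhds.mul (hRlim c d)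
  apply le_of_tendsto ht
  filter_upwards with k
  have := hRs k q hq d
  rw [qbd_vecMul_apply] at this
  exact this

lemma qbd_Rpow_nonneg (hR0 : ∀ i j, 0 ≤ R i j) : ∀ k i j, 0 ≤ (R ^ k) i j := by
  intro k
  induction k with
  | zero =>
    intro i j
    simp [Matrix.one_apply]
    split_ifs <;> norm_num
  | succ k ih =>
    intro i j
    rw [pow_succ, Matrix.mul_apply]
    exact Finset.sum_nonneg fun m _ => mul_nonneg (ih i m) (hR0 m j)


lemma qbd_Rpow_tendsto_zero
    (hR0 : ∀ i j, 0 ≤ R i j) (hπs : Summable π) (hπ1pos : ∀ c, 0 < π (c, 1))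
    (hπ0 : ∀ x, 0 ≤ π x)
    (hpiR : ∀ q, 1 ≤ q → ∀ d, (∑ c, π (c, q) * R c d) ≤ π (d, q + 1)) :
    ∀ c d, Tendsto (fun k => (R ^ k) c d) atTop (nhds 0) := by
  have hiter : ∀ k d, (∑ c, π (c, 1) * (R ^ k) c d) ≤ π (d, 1 + k) := by
    intro k
    induction k with
    | zero =>
      intro d
      have : (∑ c, π (c, 1) * (R ^ 0) c d) = π (d, 1) := by
        fin_cases d <;> simp [Fin.sum_univ_two, Matrix.one_apply]
      rw [this]
    | succ k ih =>
      intro d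
      have hswap : (∑ c, π (c, 1) * (R ^ (k + 1)) c d)
          = ∑ e, (∑ c, π (c, 1) * (R ^ k) c e) * R e d := by
        simp only [pow_succ, Matrix.mul_apply, Fin.sum_univ_two]
        ring
      rw [hswap]
      calc ∑ e, (∑ c, π (c, 1) * (R ^ k) c e) * R e d
          ≤ ∑ e, π (e, 1 + k) * R e d :=
            Finset.sum_le_sum fun e _ => mul_le_mul_of_nonneg_right (ih e) (hR0 e d)
        _ ≤ π (d, (1 + k) + 1) := hpiR (1 + k) (by omega) d
  intro c d
  have hle : ∀ k, (R ^ k) c d ≤ π (d, 1 + k) / π (c, 1) := by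
    intro k
    rw [le_div_iff₀ (hπ1pos c)]
    calc (R ^ k) c d * π (c, 1) = π (c, 1) * (R ^ k) c d := by ring
      _ ≤ ∑ c', π (c', 1) * (R ^ k) c' d :=
          Finset.single_le_sum
            (f := fun c' => π (c', 1) * (R ^ k) c' d)
            (fun c' _ => mul_nonneg (hπ0 _) (qbd_Rpow_nonneg hR0 k c' d))
            (Finset.mem_univ c)
      _ ≤ π (d, 1 + k) := hiter k d
  have htop : Tendsto (fun k => π (d, 1 + k) / π (c, 1)) atTop (nhds 0) := by
    have hs : Summable fun k => π (d, 1 + k) := qbd_pi_summable hπs d 1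
    have := hs.tendsto_atTop_zero.div_const (π (c, 1))
    simpa using this
  exact tendsto_of_tendsto_of_tendsto_of_le_of_le tendsto_const_nhds htop
    (fun k => qbd_Rpow_nonneg hR0 k c d) hle
end I




section H
variable {A0 A1 A2 C0 C1 : Matrix (Fin 2) (Fin 2) ℝ}



lemma qbd_trap_of_closed (hirr : ∀ x y : Fin 2 × ℕ, ∃ n : ℕ,
      0 < kernelPow (qbdKernel A0 A1 A2 C0 C1) n x y)
    (S : Set (Fin 2 × ℕ))
    (hcl : ∀ x ∈ S, ∀ y, y ∉ S → qbdKernel A0 A1 A2 C0 C1 x y = 0)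
    (x0 y0 : Fin 2 × ℕ) (hx0 : x0 ∈ S) (hy0 : y0 ∉ S) : False := by
  obtain ⟨n, hn⟩ := hirr x0 y0
  rw [qbd_invariant _ S hcl x0 hx0 n y0 hy0] at hn
  exact lt_irrefl 0 hn

/-- `A2 = 0` contradicts irreducibility. -/
lemma qbd_trap0 (hirr : ∀ x y : Fin 2 × ℕ, ∃ n : ℕ,
      0 < kernelPow (qbdKernel A0 A1 A2 C0 C1) n x y)
    (h2 : ∀ c j, A2 c j = 0) : False := by
  apply qbd_trap_of_closed hirr {x : Fin 2 × ℕ | 1 ≤ x.2} _ ((0 : Fin 2), 1) ((0 : Fin 2), 0)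
    (by simp) (by simp)
  rintro ⟨cx, l⟩ hx ⟨cy, m⟩ hy
  simp only [Set.mem_setOf_eq] at hx hy
  rw [qbd_ker_eval cx cy l m (by omega)]
  split_ifs with i1 i2 i3
  · exact h2 cx cy
  · omega
  · omega
  · rfl

/-- absorbing channel `c` above level `q` (case `R c c' = 0`). -/
lemma qbd_trap1 (hirr : ∀ x y : Fin 2 × ℕ, ∃ n : ℕ,
      0 < kernelPow (qbdKernel A0 A1 A2 C0 C1) n x y)
    (c c' : Fin 2) (hne : c ≠ c') (q : ℕ) (hq : 1 ≤ q)
    (h2 : ∀ j, A2 c j = 0) (h1 : A1 c c' = 0) (h0 : ∀ j, A0 c j = 0) : False := by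
  apply qbd_trap_of_closed hirr {x : Fin 2 × ℕ | x.1 = c ∧ q ≤ x.2} _ (c, q) (c, 0)
    (by simp) (by simp; omega)
  rintro ⟨cx, l⟩ hx ⟨cy, m⟩ hy
  simp only [Set.mem_setOf_eq] at hx hy
  obtain ⟨rfl, hl⟩ := hx
  rw [qbd_ker_eval cx cy l m (by omega)]
  split_ifs with i1 i2 i3
  · exact h2 cy
  · by_cases hcy : cy = cx
    · exact absurd ⟨hcy, by omega⟩ hy
    · have : cy = c' := by omega
      rw [this]; exact h1
  · exact h0 cy
  · rfl

/-- trap on `{(c, ≥q)} ∪ {(c', ≥q+1)}` (case `R c c' > 0`, `A2 c' c' = 0`). -/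
lemma qbd_trap2 (hirr : ∀ x y : Fin 2 × ℕ, ∃ n : ℕ,
      0 < kernelPow (qbdKernel A0 A1 A2 C0 C1) n x y)
    (c c' : Fin 2) (hne : c ≠ c') (q : ℕ) (hq : 1 ≤ q)
    (h2 : ∀ j, A2 c j = 0) (h1 : A1 c c' = 0) (h2' : A2 c' c' = 0) : False := by
  apply qbd_trap_of_closed hirr
    {x : Fin 2 × ℕ | (x.1 = c ∧ q ≤ x.2) ∨ (x.1 = c' ∧ q + 1 ≤ x.2)} _ (c, q) (c, 0)
    (by left; simp) ?_
  · rintro ⟨cx, l⟩ hx ⟨cy, m⟩ hy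
    simp only [Set.mem_setOf_eq] at hx hy
    push_neg at hy
    rcases hx with ⟨rfl, hl⟩ | ⟨rfl, hl⟩
    · rw [qbd_ker_eval cx cy l m (by omega)]
      split_ifs with i1 i2 i3
      · exact h2 cy
      · by_cases hcy : cy = cx
        · have := hy.1 hcy; omega
        · have : cy = c' := by omega
          rw [this]; exact h1
      · by_cases hcy : cy = cx
        · have := hy.1 hcy; omega
        · have : cy = c' := by omega
          have := hy.2 this; omega
      · rfl
    · rw [qbd_ker_eval cx cy l m (by omega)]
      split_ifs with i1 i2 i3
      · by_cases hcy : cy = cx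
        · rw [hcy]; exact h2'
        · have : cy = c := by omega
          have := hy.1 this; omega
      · by_cases hcy : cy = cx
        · have := hy.2 hcy; omega
        · have : cy = c := by omega
          have := hy.1 this; omega
      · by_cases hcy : cy = cx
        · have := hy.2 hcy; omega
        · have : cy = c := by omega
          have := hy.1 this; omega
      · rfl
  · simp only [Set.mem_setOf_eq]
    push_neg
    exact ⟨fun _ => by omega, fun _ => by omega⟩
end H

theorem stmt0
    (A0 A1 A2 C0 C1 : Matrix (Fin 2) (Fin 2) ℝ)
    (hA0 : ∀ c d, 0 ≤ A0 c d) (hA1 : ∀ c d, 0 ≤ A1 c d) (hA2 : ∀ c d, 0 ≤ A2 c d)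
    (hC0 : ∀ c d, 0 ≤ C0 c d) (hC1 : ∀ c d, 0 ≤ C1 c d)
    (hCrow : ∀ c, ∑ d, (C1 + C0) c d = 1)
    (hArow : ∀ c, ∑ d, (A2 + A1 + A0) c d = 1)
    -- the kernel is irreducible
    (hirr : ∀ x y : Fin 2 × ℕ, ∃ n : ℕ,
      0 < kernelPow (qbdKernel A0 A1 A2 C0 C1) n x y)
    -- π is a stationary probability distribution for T
    (π : Fin 2 × ℕ → ℝ)
    (hπ0 : ∀ x, 0 ≤ π x) (hπ1 : HasSum π 1)
    (hstat : ∀ y, ∑' x : Fin 2 × ℕ, π x * qbdKernel A0 A1 A2 C0 C1 x y = π y)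
    -- R is a minimal nonnegative solution of A0 + R·A1 + R²·A2 = R
    (R : Matrix (Fin 2) (Fin 2) ℝ)
    (hR0 : ∀ i j, 0 ≤ R i j)
    (hReq : A0 + R * A1 + R ^ 2 * A2 = R)
    (hRmin : ∀ S : Matrix (Fin 2) (Fin 2) ℝ, (∀ i j, 0 ≤ S i j) →
      A0 + S * A1 + S ^ 2 * A2 = S → ∀ i j, R i j ≤ S i j) :
    ∀ q : ℕ, 1 ≤ q →
      (fun c => π (c, q + 1)) = (fun c => π (c, q)) ᵥ* R := by
  classical
  intro q hq
  have hT0 := qbd_ker_nonneg hA0 hA1 hA2 hC0 hC1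
  have hT1 := qbd_ker_le_one hA0 hA1 hA2 hC0 hC1 hCrow hArow
  have hP0 := qbd_pow_nonneg hT0
  have hπpos : ∀ y, 0 < π y :=
    qbd_pi_pos _ hT0 hT1 hP0 hirr π hπ0 hπ1 hstat
  have hbal : ∀ q, 1 ≤ q → ∀ d, π (d, q + 1) = (∑ c, π (c, q) * A0 c d)
      + (∑ c, π (c, q + 1) * A1 c d) + (∑ c, π (c, q + 2) * A2 c d) :=
    fun q hq d => qbd_balance hstat q hq d
  have hRs0 := qbdRs_nonneg hA0 hA1 hA2
  have hRlim := qbd_R_is_limit hA0 hA1 hA2 hR0 hReq hRmin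
  have hRs := qbd_pi_Rs_le hA0 hA1 hA2 hRs0 hπ0 hbal
  have hpiR := qbd_pi_R_le hR0 hRlim hRs
  have hδ0 : ∀ q, 1 ≤ q → ∀ c, 0 ≤ qbdDelta π R q c := by
    intro q hq c
    have := hpiR q hq c
    simp only [qbdDelta]
    linarith
  have hRk := qbd_Rpow_tendsto_zero hR0 hπ1.summable (fun c => hπpos (c, 1)) hπ0 hpiR
  have hstar := qbd_star hArow hReq hRk
  have hrel := qbd_delta_rel (π := π) hstat hbal hReq
  have hsumδ : ∀ (q : ℕ) (c : Fin 2), Summable fun k => qbdDelta π R (q + k) c :=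
    fun q c => qbd_delta_summable (R := R) hπ1.summable q c
  have hA2z : ∀ q, 1 ≤ q → ∀ c d, qbdDelta π R q c * A2 c d = 0 :=
    fun q hq => qbd_deltaA2_zero hsumδ hrel hstar hArow hδ0 hA2 q hq
  have hrel2 : ∀ q, 1 ≤ q → ∀ d, qbdDelta π R q d =
      ∑ c, qbdDelta π R q c * (A1 c d + (R * A2) c d) := by
    intro q hq d
    have h := hrel q hq d
    have hz : ∀ c, qbdDelta π R (q + 1) c * A2 c d = 0 :=
      fun c => hA2z (q + 1) (by omega) c d
    simp only [Fin.sum_univ_two] at h ⊢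
    rw [hz 0, hz 1] at h
    linear_combination h
  have hδzero : ∀ q, 1 ≤ q → ∀ d, qbdDelta π R q d = 0 := by
    intro q hq d
    by_cases hA2all : ∀ c j, A2 c j = 0
    · exact (qbd_trap0 hirr hA2all).elim
    push_neg at hA2all
    obtain ⟨c', j', hcj⟩ := hA2all
    by_cases hrowd : ∀ j, A2 d j = 0
    · -- row d of A2 vanishes
      have hne : d ≠ c' := fun h => hcj (h ▸ hrowd j')
      have hδc' : qbdDelta π R q c' = 0 := by
        rcases mul_eq_zero.mp (hA2z q hq c' j') with h | h
        · exact h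
        · exact absurd h hcj
      by_contra hdd
      have hdpos : 0 < qbdDelta π R q d := lt_of_le_of_ne (hδ0 q hq d) (Ne.symm hdd)
      have hsum2 : ∀ f : Fin 2 → ℝ, (∑ c, f c) = f d + f c' := by
        intro f
        have hdc : d = 0 ∧ c' = 1 ∨ d = 1 ∧ c' = 0 := by omega
        rcases hdc with ⟨h1, h2⟩ | ⟨h1, h2⟩ <;> subst h1 <;> subst h2 <;>
          simp [Fin.sum_univ_two] <;> ring
      have hc'rel := hrel2 q hq c'
      rw [hsum2, hδc'] at hc'rel
      have hM0 : A1 d c' + (R * A2) d c' = 0 := by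
        have hprod : qbdDelta π R q d * (A1 d c' + (R * A2) d c') = 0 := by
          linarith [hc'rel]
        rcases mul_eq_zero.mp hprod with h | h
        · exact absurd h (ne_of_gt hdpos)
        · exact h
      have hRA2nn : 0 ≤ (R * A2) d c' := qbd_mul_nonneg hR0 hA2 d c'
      have hA1dc' : A1 d c' = 0 := by linarith [hA1 d c']
      have hRA2dc' : (R * A2) d c' = 0 := by linarith [hA1 d c']
      have hexp : (R * A2) d c' = R d c' * A2 c' c' := by
        rw [Matrix.mul_apply, hsum2 (fun e => R d e * A2 e c'), hrowd c']
        ring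
      by_cases hRdc' : R d c' = 0
      · -- A0 row d vanishes as well
        have hst := hstar d
        rw [hsum2 (fun e => R d e * (∑ j, A2 e j))] at hst
        simp only [Fin.sum_univ_two] at hst
        rw [hrowd 0, hrowd 1, hRdc'] at hst
        have hsum0 : A0 d 0 + A0 d 1 = 0 := by linarith [hst]
        have hA0row : ∀ j, A0 d j = 0 := by
          intro j
          have h0 := hA0 d 0
          have h1 := hA0 d 1
          have hj : j = 0 ∨ j = 1 := by omega
          rcases hj with rfl | rfl <;> linarith
        exact (qbd_trap1 hirr d c' hne q hq hrowd hA1dc' hA0row).elim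
      · have hA2c'c' : A2 c' c' = 0 := by
          rw [hexp] at hRA2dc'
          rcases mul_eq_zero.mp hRA2dc' with h | h
          · exact absurd h hRdc'
          · exact h
        exact (qbd_trap2 hirr d c' hne q hq hrowd hA1dc' hA2c'c').elim
    · push_neg at hrowd
      obtain ⟨j, hj⟩ := hrowd
      rcases mul_eq_zero.mp (hA2z q hq d j) with h | h
      · exact h
      · exact absurd h hj
  funext d
  have h := hδzero q hq d
  simp only [qbdDelta] at h
  have hv : ((fun c => π (c, q)) ᵥ* R) d = ∑ c, π (c, q) * R c d :=
    qbd_vecMul_apply _ R d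
  rw [hv]
  linarith
end

section
/- Suppose π is a stationary probability distribution for T, A2 is invertible, R is a 2×2 real matrix with nonnegative entries and spectral radius strictly less than 1 such that π_{q+1} = π_q · R for all q ≥ 1, and π_1 = π_0 · Z where Z = (I − C1) · A2⁻¹. Assume moreover that the matrix I + Z·(I − R)⁻¹ is invertible. Then π_0 = (β/(α+β), α/(α+β)) · (I + Z·(I − R)⁻¹)⁻¹. -/
open Matrix

/-- The spectral radius of a real `2 × 2` matrix: the maximum of the absolute values
of its complex eigenvalues. -/
noncomputable def specRad (R : Matrix (Fin 2) (Fin 2) ℝ) : ℝ :=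
  sSup {r : ℝ | ∃ μ : ℂ, μ ∈ spectrum ℂ (R.map (algebraMap ℝ ℂ)) ∧ r = ‖μ‖}

section auxlemmas
variable (A0 A1 A2 C0 C1 : Matrix (Fin 2) (Fin 2) ℝ)

lemma qbd_k00 : ∀ c d, qbdKernel A0 A1 A2 C0 C1 (c,0) (d,0) = C1 c d := by
  intro c d; simp [qbdKernel]
lemma qbd_k10 : ∀ c d, qbdKernel A0 A1 A2 C0 C1 (c,1) (d,0) = A2 c d := by
  intro c d; simp [qbdKernel]
lemma qbd_k01 : ∀ c d, qbdKernel A0 A1 A2 C0 C1 (c,0) (d,1) = C0 c d := by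
  intro c d; simp [qbdKernel]
lemma qbd_k11 : ∀ c d, qbdKernel A0 A1 A2 C0 C1 (c,1) (d,1) = A1 c d := by
  intro c d; simp [qbdKernel]
lemma qbd_k21 : ∀ c d, qbdKernel A0 A1 A2 C0 C1 (c,2) (d,1) = A2 c d := by
  intro c d; simp [qbdKernel]
lemma qbd_kA0 : ∀ (q : ℕ) c d, qbdKernel A0 A1 A2 C0 C1 (c,q+1) (d,q+2) = A0 c d := by
  intro q c d; simp only [qbdKernel]; norm_num
lemma qbd_kA1 : ∀ (q : ℕ) c d, qbdKernel A0 A1 A2 C0 C1 (c,q+2) (d,q+2) = A1 c d := by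
  intro q c d; simp only [qbdKernel]; norm_num
lemma qbd_kA2 : ∀ (q : ℕ) c d, qbdKernel A0 A1 A2 C0 C1 (c,q+3) (d,q+2) = A2 c d := by
  intro q c d; simp only [qbdKernel]; norm_num
end auxlemmas

lemma aux_fix_unique (α β : ℝ) (hα : α ∈ Set.Ioo (0:ℝ) 1) (hβ : β ∈ Set.Ioo (0:ℝ) 1)
    (N : ℕ) (hN : 1 ≤ N) (σ : Fin 2 → ℝ)
    (hfix : σ ᵥ* (!![1-α, α; β, 1-β] : Matrix (Fin 2) (Fin 2) ℝ)^N = σ)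
    (hsum : σ 0 + σ 1 = 1) : σ = ![β/(α+β), α/(α+β)] := by
  obtain ⟨ha0, ha1⟩ := hα
  obtain ⟨hb0, hb1⟩ := hβ
  have hab : 0 < α + β := by linarith
  set P : Matrix (Fin 2) (Fin 2) ℝ := !![1-α, α; β, 1-β] with hP
  set v : Fin 2 → ℝ := ![β/(α+β), α/(α+β)] with hv
  have hvsum : v 0 + v 1 = 1 := by
    simp [hv]
    field_simp
    ring
  set δ : Fin 2 → ℝ := σ - v with hδ
  have hδ1 : δ 1 = -δ 0 := by
    have := hvsum
    simp only [hδ, Pi.sub_apply]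
    linarith
  have hδP : δ ᵥ* P = (1 - α - β) • δ := by
    funext j
    fin_cases j <;>
      simp [Matrix.vecMul, dotProduct, Fin.sum_univ_two, hP, hδ1] <;> ring
  have hvP : v ᵥ* P = v := by
    funext j
    fin_cases j <;>
      simp [Matrix.vecMul, dotProduct, Fin.sum_univ_two, hP, hv] <;>
      field_simp <;> ring
  have hδPn : ∀ n : ℕ, δ ᵥ* P^n = ((1-α-β)^n) • δ := by
    intro n
    induction n with
    | zero => simp
    | succ n ih =>
      rw [pow_succ, ← Matrix.vecMul_vecMul, ih, Matrix.smul_vecMul, hδP, pow_succ, smul_smul]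
  have hvPn : ∀ n : ℕ, v ᵥ* P^n = v := by
    intro n
    induction n with
    | zero => simp
    | succ n ih => rw [pow_succ, ← Matrix.vecMul_vecMul, ih, hvP]
  have hδfix : δ ᵥ* P^N = δ := by
    rw [hδ, Matrix.sub_vecMul, hfix, hvPn]
  have hlam : |1 - α - β| < 1 := by
    rw [abs_lt]; constructor <;> linarith
  have hlamN : (1-α-β)^N ≠ 1 := by
    intro h
    have : |(1-α-β)^N| < 1 := by
      rw [abs_pow]
      calc |1-α-β|^N ≤ |1-α-β|^1 := pow_le_pow_of_le_one (abs_nonneg _) hlam.le hN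
      _ < 1 := by simpa using hlam
    rw [h] at this; simp at this
  have hδ0 : δ = 0 := by
    have h1 : ((1-α-β)^N - 1) • δ = 0 := by
      rw [sub_smul, ← hδPn, hδfix, one_smul, sub_self]
    rcases smul_eq_zero.mp h1 with h | h
    · exact absurd (by linarith) hlamN
    · exact h
  have : σ = v := by
    have := hδ0
    rw [hδ, sub_eq_zero] at this
    exact this
  exact this

lemma aux_oneSub_isUnit (R : Matrix (Fin 2) (Fin 2) ℝ) (hRspec : specRad R < 1) :
    IsUnit (1 - R) := by
  by_contra h
  rw [Matrix.isUnit_iff_isUnit_det, isUnit_iff_ne_zero, not_ne_iff] at h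
  have h1 : (1:ℂ) ∈ spectrum ℂ (R.map (algebraMap ℝ ℂ)) := by
    rw [spectrum.mem_iff]
    rw [Matrix.isUnit_iff_isUnit_det]
    have heq : (algebraMap ℂ (Matrix (Fin 2) (Fin 2) ℂ) 1 - R.map (algebraMap ℝ ℂ))
        = (1 - R).map (algebraMap ℝ ℂ) := by
      rw [_root_.map_one]
      ext i j
      simp [Matrix.map_apply, Matrix.sub_apply, Matrix.one_apply, apply_ite]
    rw [heq]
    have hdet : ((1 - R).map (algebraMap ℝ ℂ)).det = algebraMap ℝ ℂ ((1-R).det) := by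
      rw [← RingHom.mapMatrix_apply, ← RingHom.map_det]
    rw [hdet, h]
    simp
  have hbdd : BddAbove {r : ℝ | ∃ μ : ℂ, μ ∈ spectrum ℂ (R.map (algebraMap ℝ ℂ)) ∧ r = ‖μ‖} := by
    have hEq : {r : ℝ | ∃ μ : ℂ, μ ∈ spectrum ℂ (R.map (algebraMap ℝ ℂ)) ∧ r = ‖μ‖}
        = (fun μ : ℂ => ‖μ‖) '' spectrum ℂ (R.map (algebraMap ℝ ℂ)) := by
      ext r; simp [eq_comm, Set.mem_image]
    rw [hEq]
    exact ((Matrix.finite_spectrum _).image _).bddAbove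
  have : (1:ℝ) ≤ specRad R := le_csSup hbdd ⟨1, h1, by simp⟩
  linarith

theorem stmt2
    (A0 A1 A2 C0 C1 : Matrix (Fin 2) (Fin 2) ℝ)
    (hA0 : ∀ c d, 0 ≤ A0 c d) (hA1 : ∀ c d, 0 ≤ A1 c d) (hA2 : ∀ c d, 0 ≤ A2 c d)
    (hC0 : ∀ c d, 0 ≤ C0 c d) (hC1 : ∀ c d, 0 ≤ C1 c d)
    (hCrow : ∀ c, ∑ d, (C1 + C0) c d = 1)
    (hArow : ∀ c, ∑ d, (A2 + A1 + A0) c d = 1)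
    (α β : ℝ) (hα : α ∈ Set.Ioo (0 : ℝ) 1) (hβ : β ∈ Set.Ioo (0 : ℝ) 1)
    (N : ℕ) (hN : 1 ≤ N)
    (hC : C1 + C0 = (!![1 - α, α; β, 1 - β]) ^ N)
    (hA : A2 + A1 + A0 = (!![1 - α, α; β, 1 - β]) ^ N)
    -- π is a stationary probability distribution for T
    (π : Fin 2 × ℕ → ℝ)
    (hπ0 : ∀ x, 0 ≤ π x) (hπ1 : HasSum π 1)
    (hstat : ∀ y, ∑' x : Fin 2 × ℕ, π x * qbdKernel A0 A1 A2 C0 C1 x y = π y)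
    -- A2 is invertible
    (hA2inv : IsUnit A2)
    -- R has nonnegative entries, spectral radius < 1, and governs levels q ≥ 1
    (R : Matrix (Fin 2) (Fin 2) ℝ)
    (hR0 : ∀ i j, 0 ≤ R i j)
    (hRspec : specRad R < 1)
    (hRlev : ∀ q : ℕ, 1 ≤ q → (fun c => π (c, q + 1)) = (fun c => π (c, q)) ᵥ* R)
    (hπ1eq : (fun c => π (c, 1)) = (fun c => π (c, 0)) ᵥ* ((1 - C1) * A2⁻¹))
    -- I + Z·(I − R)⁻¹ is invertible
    (hZinv : IsUnit (1 + (1 - C1) * A2⁻¹ * (1 - R)⁻¹)) :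
    (fun c => π (c, 0)) =
      ![β / (α + β), α / (α + β)] ᵥ* (1 + (1 - C1) * A2⁻¹ * (1 - R)⁻¹)⁻¹ := by
  -- summability of fibers
  have hsummable : ∀ c : Fin 2, Summable (fun q : ℕ => π (c, q)) := by
    intro c
    exact hπ1.summable.comp_injective (fun a b h => by simpa using h)
  have hsum_shift : ∀ (c : Fin 2) (k : ℕ), Summable (fun q : ℕ => π (c, q + k)) := by
    intro c k
    exact (hsummable c).comp_injective (fun a b h => by omega)
  -- the stationarity equations at finitely-supported levels
  have key : ∀ (y : Fin 2 × ℕ) (S : Finset ℕ),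
      (∀ x : Fin 2 × ℕ, x.2 ∉ S → qbdKernel A0 A1 A2 C0 C1 x y = 0) →
      ∑ q ∈ S, ∑ c, π (c,q) * qbdKernel A0 A1 A2 C0 C1 (c,q) y = π y := by
    intro y S h
    rw [← hstat y, tsum_eq_sum (s := Finset.univ ×ˢ S)
      (by intro x hx
          have : x.2 ∉ S := by
            intro hm
            exact hx (Finset.mem_product.mpr ⟨Finset.mem_univ _, hm⟩)
          rw [h x this, mul_zero])]
    rw [Finset.sum_product, Finset.sum_comm]
  have E0 : ∀ d, (∑ c, π (c,0) * C1 c d) + (∑ c, π (c,1) * A2 c d) = π (d, 0) := by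
    intro d
    have hk : ∀ x : Fin 2 × ℕ, x.2 ∉ ({0,1} : Finset ℕ) → qbdKernel A0 A1 A2 C0 C1 x (d,0) = 0 := by
      intro x hx
      simp only [Finset.mem_insert, Finset.mem_singleton] at hx
      push_neg at hx
      obtain ⟨hx0, hx1⟩ := hx
      simp only [qbdKernel]
      split_ifs <;> first | rfl | omega | simp_all
    have h := key (d,0) {0,1} hk
    rw [Finset.sum_insert (by norm_num), Finset.sum_singleton] at h
    simpa only [qbd_k00, qbd_k10] using h
  have E1 : ∀ d, (∑ c, π (c,0) * C0 c d) + ((∑ c, π (c,1) * A1 c d) + (∑ c, π (c,2) * A2 c d)) = π (d, 1) := by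
    intro d
    have hk : ∀ x : Fin 2 × ℕ, x.2 ∉ ({0,1,2} : Finset ℕ) → qbdKernel A0 A1 A2 C0 C1 x (d,1) = 0 := by
      intro x hx
      simp only [Finset.mem_insert, Finset.mem_singleton] at hx
      push_neg at hx
      obtain ⟨hx0, hx1, hx2⟩ := hx
      simp only [qbdKernel]
      split_ifs <;> first | rfl | omega | simp_all
    have h := key (d,1) {0,1,2} hk
    rw [Finset.sum_insert (by norm_num), Finset.sum_insert (by norm_num),
      Finset.sum_singleton] at h
    simpa only [qbd_k01, qbd_k11, qbd_k21] using h
  have E2 : ∀ (q : ℕ) d, (∑ c, π (c,q+1) * A0 c d) + ((∑ c, π (c,q+2) * A1 c d) + (∑ c, π (c,q+3) * A2 c d)) = π (d, q+2) := by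
    intro q d
    have hk : ∀ x : Fin 2 × ℕ, x.2 ∉ ({q+1,q+2,q+3} : Finset ℕ) → qbdKernel A0 A1 A2 C0 C1 x (d,q+2) = 0 := by
      intro x hx
      simp only [Finset.mem_insert, Finset.mem_singleton] at hx
      push_neg at hx
      obtain ⟨hx0, hx1, hx2⟩ := hx
      simp only [qbdKernel]
      split_ifs <;> first | rfl | omega | simp_all
    have h := key (d,q+2) {q+1,q+2,q+3} hk
    rw [Finset.sum_insert (by simp), Finset.sum_insert (by simp),
      Finset.sum_singleton] at h
    simpa only [qbd_kA0, qbd_kA1, qbd_kA2] using h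
  -- the tail sums
  set s : Fin 2 → ℝ := fun c => ∑' q : ℕ, π (c, q+1) with hs
  set t : Fin 2 → ℝ := fun c => ∑' q : ℕ, π (c, q+2) with ht
  set u : Fin 2 → ℝ := fun c => ∑' q : ℕ, π (c, q+3) with hu
  have hst : ∀ c, s c = π (c,1) + t c := by
    intro c
    have := Summable.tsum_eq_zero_add (f := fun q : ℕ => π (c, q+1)) (hsum_shift c 1)
    simpa using this
  have htu : ∀ c, t c = π (c,2) + u c := by
    intro c
    have := Summable.tsum_eq_zero_add (f := fun q : ℕ => π (c, q+2)) (hsum_shift c 2)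
    simpa using this
  -- swap lemma : tsum over q of finite sums
  have hswap : ∀ (M : Matrix (Fin 2) (Fin 2) ℝ) (k : ℕ) (d : Fin 2),
      ∑' q : ℕ, (∑ c, π (c, q + k) * M c d) = ∑ c, (∑' q : ℕ, π (c, q+k)) * M c d := by
    intro M k d
    rw [Summable.tsum_finsetSum (fun c _ => (hsum_shift c k).mul_right _)]
    exact Finset.sum_congr rfl fun c _ => tsum_mul_right
  -- summing E2 over q
  have F3 : ∀ d, (∑ c, s c * A0 c d) + ((∑ c, t c * A1 c d) + (∑ c, u c * A2 c d)) = t d := by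
    intro d
    have h1 : ∑' q : ℕ, π (d, q+2) = t d := rfl
    rw [← h1]
    have hsummA : ∀ (M : Matrix (Fin 2) (Fin 2) ℝ) (k : ℕ),
        Summable (fun q : ℕ => ∑ c, π (c, q + k) * M c d) :=
      fun M k => summable_sum (fun c _ => (hsum_shift c k).mul_right _)
    calc (∑ c, s c * A0 c d) + ((∑ c, t c * A1 c d) + (∑ c, u c * A2 c d))
        = (∑' q : ℕ, ∑ c, π (c, q+1) * A0 c d) + ((∑' q : ℕ, ∑ c, π (c, q+2) * A1 c d)
            + (∑' q : ℕ, ∑ c, π (c, q+3) * A2 c d)) := by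
          rw [hswap A0 1 d, hswap A1 2 d, hswap A2 3 d]
      _ = ∑' q : ℕ, ((∑ c, π (c, q+1) * A0 c d) + ((∑ c, π (c, q+2) * A1 c d) + (∑ c, π (c, q+3) * A2 c d))) := by
          rw [Summable.tsum_add (hsummA A0 1) ((hsummA A1 2).add (hsummA A2 3)),
            Summable.tsum_add (hsummA A1 2) (hsummA A2 3)]
      _ = ∑' q : ℕ, π (d, q+2) := by
          exact tsum_congr fun q => E2 q d
  -- t = s ᵥ* R
  have hTR : ∀ d, t d = ∑ c, s c * R c d := by
    intro d
    have hlev : ∀ q : ℕ, π (d, q+2) = ∑ c, π (c, q+1) * R c d := by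
      intro q
      have := hRlev (q+1) (by omega)
      have h2 := congrFun this d
      simpa [Matrix.vecMul, dotProduct] using h2
    calc t d = ∑' q : ℕ, π (d, q+2) := rfl
      _ = ∑' q : ℕ, ∑ c, π (c, q+1) * R c d := tsum_congr fun q => hlev q
      _ = ∑ c, s c * R c d := hswap R 1 d
  -- σ := π₀ + s  is fixed by P^N and sums to 1
  set σ : Fin 2 → ℝ := fun c => π (c, 0) + s c with hσ
  set P : Matrix (Fin 2) (Fin 2) ℝ := !![1-α, α; β, 1-β] with hPdef
  have hσfix : σ ᵥ* P ^ N = σ := by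
    funext d
    have expand : (σ ᵥ* P ^ N) d = ∑ c, σ c * (P^N) c d := by
      simp [Matrix.vecMul, dotProduct]
    rw [expand]
    have hPN : ∀ c d, (P^N) c d = C1 c d + C0 c d := by
      intro c d
      rw [← hC]; simp [Matrix.add_apply]
    have hPN' : ∀ c d, (P^N) c d = A2 c d + (A1 c d + A0 c d) := by
      intro c d
      rw [← hA]; simp [Matrix.add_apply]; ring
    have split : ∑ c, σ c * (P^N) c d
        = (∑ c, π (c,0) * (C1 c d + C0 c d)) + ∑ c, s c * (A2 c d + (A1 c d + A0 c d)) := by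
      rw [← Finset.sum_add_distrib]
      refine Finset.sum_congr rfl fun c _ => ?_
      rw [← hPN, ← hPN', hσ]
      ring
    rw [split]
    have e0 := E0 d
    have e1 := E1 d
    have f3 := F3 d
    have hts : ∀ c, t c = s c - π (c,1) := fun c => by have := hst c; linarith
    have hus : ∀ c, u c = s c - π (c,1) - π (c,2) := fun c => by
      have := htu c; have := hst c; linarith
    have htA1 : ∑ c, t c * A1 c d = (∑ c, s c * A1 c d) - ∑ c, π (c,1) * A1 c d := by
      rw [← Finset.sum_sub_distrib]
      exact Finset.sum_congr rfl fun c _ => by rw [hts c]; ring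
    have huA2 : ∑ c, u c * A2 c d = (∑ c, s c * A2 c d) - (∑ c, π (c,1) * A2 c d) - ∑ c, π (c,2) * A2 c d := by
      rw [← Finset.sum_sub_distrib, ← Finset.sum_sub_distrib]
      exact Finset.sum_congr rfl fun c _ => by rw [hus c]; ring
    have htd : t d = s d - π (d,1) := hts d
    have hC1C0 : ∑ c, π (c,0) * (C1 c d + C0 c d) = (∑ c, π (c,0) * C1 c d) + ∑ c, π (c,0) * C0 c d := by
      rw [← Finset.sum_add_distrib]
      exact Finset.sum_congr rfl fun c _ => by ring
    have hAsplit : ∑ c, s c * (A2 c d + (A1 c d + A0 c d))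
        = (∑ c, s c * A2 c d) + ((∑ c, s c * A1 c d) + ∑ c, s c * A0 c d) := by
      rw [← Finset.sum_add_distrib, ← Finset.sum_add_distrib]
      exact Finset.sum_congr rfl fun c _ => by ring
    rw [hC1C0, hAsplit]
    rw [htA1, huA2, htd] at f3
    show _ = π (d,0) + s d
    linarith
  have hσsum : σ 0 + σ 1 = 1 := by
    have hfib : HasSum (fun c : Fin 2 => ∑' q : ℕ, π (c, q)) 1 :=
      HasSum.prod_fiberwise hπ1 (fun c => (hsummable c).hasSum)
    have h1 : ∑ c : Fin 2, ∑' q : ℕ, π (c, q) = 1 := by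
      rw [← hfib.tsum_eq, tsum_fintype]
    have h2 : ∀ c, ∑' q : ℕ, π (c, q) = π (c,0) + s c := by
      intro c
      have := Summable.tsum_eq_zero_add (f := fun q : ℕ => π (c, q)) (hsummable c)
      simpa using this
    rw [Fin.sum_univ_two, h2 0, h2 1] at h1
    simpa [hσ] using h1
  have hσv : σ = ![β / (α + β), α / (α + β)] :=
    aux_fix_unique α β hα hβ N hN σ hσfix hσsum
  -- s = π₁ ᵥ* (1 - R)⁻¹
  have hRunit : IsUnit (1 - R) := aux_oneSub_isUnit R hRspec
  have hRdet : IsUnit (1 - R).det := (Matrix.isUnit_iff_isUnit_det _).mp hRunit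
  have hsR : s ᵥ* (1 - R) = fun c => π (c, 1) := by
    funext d
    have : (s ᵥ* (1 - R)) d = s d - ∑ c, s c * R c d := by
      fin_cases d <;>
        simp [Matrix.vecMul, dotProduct, Matrix.sub_apply, Matrix.one_apply,
          Fin.sum_univ_two, mul_sub, sub_mul] <;> ring
    rw [this, ← hTR d]
    have := hst d
    linarith
  have hsinv : s = (fun c => π (c, 1)) ᵥ* (1 - R)⁻¹ := by
    rw [← hsR, Matrix.vecMul_vecMul, Matrix.mul_nonsing_inv _ hRdet, Matrix.vecMul_one]
  -- conclude
  set M : Matrix (Fin 2) (Fin 2) ℝ := 1 + (1 - C1) * A2⁻¹ * (1 - R)⁻¹ with hM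
  have hπ0M : (fun c => π (c, 0)) ᵥ* M = σ := by
    rw [hM, Matrix.vecMul_add, Matrix.vecMul_one]
    have : (fun c => π (c, 0)) ᵥ* ((1 - C1) * A2⁻¹ * (1 - R)⁻¹)
        = (fun c => π (c, 1)) ᵥ* (1 - R)⁻¹ := by
      rw [← Matrix.vecMul_vecMul, ← hπ1eq]
    rw [this, ← hsinv]
    rfl
  have hMdet : IsUnit M.det := (Matrix.isUnit_iff_isUnit_det _).mp hZinv
  calc (fun c => π (c, 0))
      = ((fun c => π (c, 0)) ᵥ* M) ᵥ* M⁻¹ := by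
        rw [Matrix.vecMul_vecMul, Matrix.mul_nonsing_inv _ hMdet, Matrix.vecMul_one]
    _ = ![β / (α + β), α / (α + β)] ᵥ* M⁻¹ := by rw [hπ0M, hσv]
end

section
/- Let R be a 2×2 real matrix with all entries strictly positive and spectral radius ρ(R) ∈ (0,1). Let π_1 be a nonzero row vector in ℝ² with nonnegative entries, and for each q ≥ 1 set π_q = π_1 · R^{q−1}. For each τ ≥ 1 define the tail probability 𝒫(τ) = ∑_{q ≥ τ} (π_q(0) + π_q(1)) (this series converges absolutely because ρ(R) < 1). Then lim_{τ→∞} τ⁻¹ · log 𝒫(τ) = log ρ(R). -/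
open Matrix

lemma mem_spec_iff (M : Matrix (Fin 2) (Fin 2) ℂ) (μ : ℂ) :
    μ ∈ spectrum ℂ M ↔ μ^2 - (M 0 0 + M 1 1)*μ + (M 0 0 * M 1 1 - M 0 1 * M 1 0) = 0 := by
  rw [spectrum.mem_iff, Matrix.isUnit_iff_isUnit_det, isUnit_iff_ne_zero, not_ne_iff,
    Matrix.det_fin_two]
  simp only [Matrix.sub_apply, Matrix.algebraMap_matrix_apply]
  norm_num
  constructor <;> intro h <;> linear_combination h

lemma specRad_eq (R : Matrix (Fin 2) (Fin 2) ℝ) (hRpos : ∀ i j, 0 < R i j) :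
    specRad R = (R 0 0 + R 1 1 + Real.sqrt ((R 0 0 - R 1 1)^2 + 4*(R 0 1)*(R 1 0)))/2 := by
  set a := R 0 0; set b := R 0 1; set c := R 1 0; set d := R 1 1
  have ha := hRpos 0 0; have hb := hRpos 0 1; have hc := hRpos 1 0; have hd := hRpos 1 1
  set s := Real.sqrt ((a-d)^2 + 4*b*c) with hs_def
  have hΔ : (0:ℝ) ≤ (a-d)^2 + 4*b*c := by positivity
  have hs2 : s^2 = (a-d)^2 + 4*b*c := Real.sq_sqrt hΔ
  have hs0 : 0 ≤ s := Real.sqrt_nonneg _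
  have hsabs : |a - d| < s := by
    have h1 : Real.sqrt ((a-d)^2) < s := Real.sqrt_lt_sqrt (by positivity) (by nlinarith)
    rwa [Real.sqrt_sq_eq_abs] at h1
  set ρ := (a + d + s)/2 with hρ_def
  set lam := (a + d - s)/2 with hlam_def
  have hρ0 : 0 < ρ := by have := abs_nonneg (a-d); nlinarith
  have habs : |lam| < ρ := by
    rw [abs_lt]
    constructor <;> nlinarith [abs_nonneg (a-d), le_abs_self (a-d), neg_abs_le (a-d)]
  have hsum : ρ + lam = a + d := by rw [hρ_def, hlam_def]; ring
  have hprod : ρ * lam = a*d - b*c := by rw [hρ_def, hlam_def]; linear_combination (-1/4) * hs2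
  have hmem : ∀ μ : ℂ, μ ∈ spectrum ℂ (R.map (algebraMap ℝ ℂ)) ↔ μ = (ρ:ℂ) ∨ μ = (lam:ℂ) := by
    intro μ
    rw [mem_spec_iff]
    simp only [Matrix.map_apply, Complex.coe_algebraMap]
    have h1 : (ρ:ℂ) + lam = ((R 0 0 : ℝ):ℂ) + ((R 1 1:ℝ):ℂ) := by
      rw [← Complex.ofReal_add, hsum, Complex.ofReal_add]
    have h2 : (ρ:ℂ) * lam = ((R 0 0:ℝ):ℂ) * ((R 1 1:ℝ):ℂ) - ((R 0 1:ℝ):ℂ) * ((R 1 0:ℝ):ℂ) := by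
      rw [← Complex.ofReal_mul, hprod]; push_cast; ring
    constructor
    · intro h
      have h3 : (μ - (ρ:ℂ)) * (μ - (lam:ℂ)) = 0 := by linear_combination h - μ * h1 + h2
      rcases mul_eq_zero.mp h3 with h | h
      · exact Or.inl (sub_eq_zero.mp h)
      · exact Or.inr (sub_eq_zero.mp h)
    · rintro (rfl | rfl)
      · linear_combination (↑ρ:ℂ) * h1 - h2
      · linear_combination (↑lam:ℂ) * h1 - h2
  have hset : {r : ℝ | ∃ μ : ℂ, μ ∈ spectrum ℂ (R.map (algebraMap ℝ ℂ)) ∧ r = ‖μ‖}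
      = {ρ, |lam|} := by
    ext r
    simp only [Set.mem_setOf_eq, Set.mem_insert_iff, Set.mem_singleton_iff]
    constructor
    · rintro ⟨μ, hμ, rfl⟩
      rcases (hmem μ).mp hμ with rfl | rfl
      · left; rw [Complex.norm_real, Real.norm_eq_abs, abs_of_pos hρ0]
      · right; rw [Complex.norm_real, Real.norm_eq_abs]
    · rintro (rfl | rfl)
      · exact ⟨(ρ:ℂ), (hmem _).mpr (Or.inl rfl), by rw [Complex.norm_real, Real.norm_eq_abs, abs_of_pos hρ0]⟩
      · exact ⟨(lam:ℂ), (hmem _).mpr (Or.inr rfl), by rw [Complex.norm_real, Real.norm_eq_abs]⟩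
  rw [specRad, hset, csSup_pair, max_eq_left habs.le]

theorem stmt3
    (R : Matrix (Fin 2) (Fin 2) ℝ)
    (hRpos : ∀ i j, 0 < R i j)
    (hspec : specRad R ∈ Set.Ioo (0 : ℝ) 1)
    (π₁ : Fin 2 → ℝ) (hπ₁ne : π₁ ≠ 0) (hπ₁nn : ∀ i, 0 ≤ π₁ i)
    -- π_q = π₁ · R^(q-1) for q ≥ 1; the tail probability Ptail(τ) = ∑_{q ≥ τ} (π_q 0 + π_q 1)
    (Ptail : ℕ → ℝ)
    (hPtail : ∀ τ : ℕ, 1 ≤ τ →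
      HasSum (fun j : ℕ =>
        (π₁ ᵥ* R ^ (τ - 1 + j)) 0 + (π₁ ᵥ* R ^ (τ - 1 + j)) 1) (Ptail τ)) :
    Filter.Tendsto (fun τ : ℕ => (τ : ℝ)⁻¹ * Real.log (Ptail τ))
      Filter.atTop (nhds (Real.log (specRad R))) := by
  classical
  have ha := hRpos 0 0; have hb := hRpos 0 1; have hc := hRpos 1 0; have hd := hRpos 1 1
  set a := R 0 0 with ha_def; set b := R 0 1 with hb_def
  set c := R 1 0 with hc_def; set d := R 1 1 with hd_def
  have hΔ : (0:ℝ) ≤ (a-d)^2 + 4*b*c := by positivity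
  set s := Real.sqrt ((a-d)^2 + 4*b*c) with hs_def
  have hs2 : s^2 = (a-d)^2 + 4*b*c := Real.sq_sqrt hΔ
  have hs0 : 0 ≤ s := Real.sqrt_nonneg _
  have hsabs : |a - d| < s := by
    have h1 : Real.sqrt ((a-d)^2) < s := Real.sqrt_lt_sqrt (by positivity) (by nlinarith)
    rwa [Real.sqrt_sq_eq_abs] at h1
  set ρ := (a + d + s)/2 with hρ_def
  have hspecR : specRad R = ρ := specRad_eq R hRpos
  rw [hspecR] at hspec ⊢
  obtain ⟨hρ0, hρ1⟩ := hspec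
  -- eigenvector
  set v : Fin 2 → ℝ := ![b, ρ - a] with hv_def
  have hv0 : 0 < v 0 := hb
  have hv1 : 0 < v 1 := by
    show 0 < ρ - a
    rw [abs_lt] at hsabs
    rw [hρ_def]; linarith [hsabs.1]
  have hRv : R *ᵥ v = ρ • v := by
    funext i
    fin_cases i
    · show (R *ᵥ v) 0 = ρ * v 0
      simp only [Matrix.mulVec, dotProduct, Fin.sum_univ_two, hv_def]
      show a * b + b * (ρ - a) = ρ * b
      ring
    · show (R *ᵥ v) 1 = ρ * v 1
      simp only [Matrix.mulVec, dotProduct, Fin.sum_univ_two, hv_def]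
      show c * b + d * (ρ - a) = ρ * (ρ - a)
      rw [hρ_def]; linear_combination (-1/4) * hs2
  have hRqv : ∀ q : ℕ, R ^ q *ᵥ v = ρ ^ q • v := by
    intro q
    induction q with
    | zero => simp
    | succ q ih =>
      rw [pow_succ, ← Matrix.mulVec_mulVec, hRv, Matrix.mulVec_smul, ih, smul_smul]
      rw [show ρ * ρ ^ q = ρ ^ (q + 1) by rw [pow_succ]; ring]
  -- entrywise nonnegativity
  have hpow : ∀ (q : ℕ) i j, 0 ≤ (R ^ q) i j := by
    intro q
    induction q with
    | zero =>
      intro i j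
      rw [pow_zero]
      by_cases h : i = j <;> simp [Matrix.one_apply, h]
    | succ q ih =>
      intro i j
      rw [pow_succ, Matrix.mul_apply]
      exact Finset.sum_nonneg fun k _ => mul_nonneg (ih i k) (hRpos k j).le
  have hwnn : ∀ (q : ℕ) i, 0 ≤ (π₁ ᵥ* R ^ q) i := by
    intro q i
    have hv : (π₁ ᵥ* R ^ q) i = π₁ 0 * (R ^ q) 0 i + π₁ 1 * (R ^ q) 1 i := by
      simp [Matrix.vecMul, dotProduct, Fin.sum_univ_two]
    rw [hv]
    exact add_nonneg (mul_nonneg (hπ₁nn 0) (hpow q 0 i)) (mul_nonneg (hπ₁nn 1) (hpow q 1 i))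
  -- the dot product identity
  set K := π₁ ⬝ᵥ v with hK_def
  have hKeq : K = π₁ 0 * v 0 + π₁ 1 * v 1 := by
    rw [hK_def]; simp [dotProduct, Fin.sum_univ_two]
  have hK : 0 < K := by
    obtain ⟨i, hi⟩ := Function.ne_iff.mp hπ₁ne
    have hnn0 := mul_nonneg (hπ₁nn 0) hv0.le
    have hnn1 := mul_nonneg (hπ₁nn 1) hv1.le
    rw [hKeq]
    fin_cases i
    · have h0 : 0 < π₁ 0 * v 0 := mul_pos ((hπ₁nn 0).lt_of_ne (Ne.symm hi)) hv0
      linarith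
    · have h0 : 0 < π₁ 1 * v 1 := mul_pos ((hπ₁nn 1).lt_of_ne (Ne.symm hi)) hv1
      linarith
  have hdot : ∀ q : ℕ, (π₁ ᵥ* R ^ q) 0 * v 0 + (π₁ ᵥ* R ^ q) 1 * v 1 = ρ ^ q * K := by
    intro q
    have h1 : (π₁ ᵥ* R ^ q) ⬝ᵥ v = π₁ ⬝ᵥ (R ^ q *ᵥ v) := (dotProduct_mulVec π₁ (R ^ q) v).symm
    rw [hRqv q] at h1
    have h2 : π₁ ⬝ᵥ (ρ ^ q • v) = ρ ^ q * (π₁ ⬝ᵥ v) := by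
      simp [dotProduct, Fin.sum_univ_two]; ring
    have h3 : (π₁ ᵥ* R ^ q) ⬝ᵥ v = (π₁ ᵥ* R ^ q) 0 * v 0 + (π₁ ᵥ* R ^ q) 1 * v 1 := by
      simp [dotProduct, Fin.sum_univ_two]
    rw [h3, h2] at h1
    rw [h1, hK_def]
  -- bounds on the row sums
  set m := min (v 0) (v 1) with hm_def
  set M := max (v 0) (v 1) with hM_def
  have hm0 : 0 < m := lt_min hv0 hv1
  have hM0 : 0 < M := lt_of_lt_of_le hv0 (le_max_left _ _)
  set c₁ := K / M with hc1_def
  set c₂ := K / m with hc2_def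
  have hc1 : 0 < c₁ := div_pos hK hM0
  have hc2 : 0 < c₂ := div_pos hK hm0
  have hlo : ∀ q : ℕ, c₁ * ρ ^ q ≤ (π₁ ᵥ* R ^ q) 0 + (π₁ ᵥ* R ^ q) 1 := by
    intro q
    rw [hc1_def, div_mul_eq_mul_div, div_le_iff₀ hM0]
    have g0 : (π₁ ᵥ* R ^ q) 0 * v 0 ≤ (π₁ ᵥ* R ^ q) 0 * M :=
      mul_le_mul_of_nonneg_left (le_max_left _ _) (hwnn q 0)
    have g1 : (π₁ ᵥ* R ^ q) 1 * v 1 ≤ (π₁ ᵥ* R ^ q) 1 * M :=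
      mul_le_mul_of_nonneg_left (le_max_right _ _) (hwnn q 1)
    calc K * ρ ^ q = (π₁ ᵥ* R ^ q) 0 * v 0 + (π₁ ᵥ* R ^ q) 1 * v 1 := by rw [hdot q]; ring
      _ ≤ (π₁ ᵥ* R ^ q) 0 * M + (π₁ ᵥ* R ^ q) 1 * M := add_le_add g0 g1
      _ = ((π₁ ᵥ* R ^ q) 0 + (π₁ ᵥ* R ^ q) 1) * M := by ring
  have hhi : ∀ q : ℕ, (π₁ ᵥ* R ^ q) 0 + (π₁ ᵥ* R ^ q) 1 ≤ c₂ * ρ ^ q := by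
    intro q
    rw [hc2_def, div_mul_eq_mul_div, le_div_iff₀ hm0]
    have g0 : (π₁ ᵥ* R ^ q) 0 * m ≤ (π₁ ᵥ* R ^ q) 0 * v 0 :=
      mul_le_mul_of_nonneg_left (min_le_left _ _) (hwnn q 0)
    have g1 : (π₁ ᵥ* R ^ q) 1 * m ≤ (π₁ ᵥ* R ^ q) 1 * v 1 :=
      mul_le_mul_of_nonneg_left (min_le_right _ _) (hwnn q 1)
    calc ((π₁ ᵥ* R ^ q) 0 + (π₁ ᵥ* R ^ q) 1) * m
        = (π₁ ᵥ* R ^ q) 0 * m + (π₁ ᵥ* R ^ q) 1 * m := by ring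
      _ ≤ (π₁ ᵥ* R ^ q) 0 * v 0 + (π₁ ᵥ* R ^ q) 1 * v 1 := add_le_add g0 g1
      _ = K * ρ ^ q := by rw [hdot q]; ring
  -- geometric sums and bounds on Ptail
  have hgeo : HasSum (fun j : ℕ => ρ ^ j) (1 - ρ)⁻¹ :=
    hasSum_geometric_of_lt_one hρ0.le hρ1
  have hPlo : ∀ τ : ℕ, 1 ≤ τ → c₁ * ρ ^ (τ - 1) * (1 - ρ)⁻¹ ≤ Ptail τ := by
    intro τ hτ
    have hg : HasSum (fun j : ℕ => c₁ * ρ ^ (τ - 1 + j)) (c₁ * ρ ^ (τ - 1) * (1 - ρ)⁻¹) := by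
      have := hgeo.mul_left (c₁ * ρ ^ (τ - 1))
      simpa [pow_add, mul_assoc] using this
    exact hasSum_le (fun j => hlo (τ - 1 + j)) hg (hPtail τ hτ)
  have hPhi : ∀ τ : ℕ, 1 ≤ τ → Ptail τ ≤ c₂ * ρ ^ (τ - 1) * (1 - ρ)⁻¹ := by
    intro τ hτ
    have hg : HasSum (fun j : ℕ => c₂ * ρ ^ (τ - 1 + j)) (c₂ * ρ ^ (τ - 1) * (1 - ρ)⁻¹) := by
      have := hgeo.mul_left (c₂ * ρ ^ (τ - 1))
      simpa [pow_add, mul_assoc] using this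
    exact hasSum_le (fun j => hhi (τ - 1 + j)) (hPtail τ hτ) hg
  have hρinv : (0:ℝ) < (1 - ρ)⁻¹ := by
    apply inv_pos.mpr; linarith
  -- log bounds
  set A := Real.log c₁ + Real.log (1 - ρ)⁻¹ with hA_def
  set B := Real.log c₂ + Real.log (1 - ρ)⁻¹ with hB_def
  have hPpos : ∀ τ : ℕ, 1 ≤ τ → 0 < Ptail τ := by
    intro τ hτ
    have h1 : 0 < c₁ * ρ ^ (τ - 1) * (1 - ρ)⁻¹ := by
      have := pow_pos hρ0 (τ - 1); positivity
    exact lt_of_lt_of_le h1 (hPlo τ hτ)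
  have hloglo : ∀ τ : ℕ, 1 ≤ τ → A + ((τ:ℝ) - 1) * Real.log ρ ≤ Real.log (Ptail τ) := by
    intro τ hτ
    have hpw := pow_pos hρ0 (τ - 1)
    have h1 : Real.log (c₁ * ρ ^ (τ - 1) * (1 - ρ)⁻¹) ≤ Real.log (Ptail τ) :=
      Real.log_le_log (by positivity) (hPlo τ hτ)
    rw [Real.log_mul (by positivity) (ne_of_gt hρinv), Real.log_mul (ne_of_gt hc1) (ne_of_gt hpw),
      Real.log_pow] at h1
    have hcast : ((τ - 1 : ℕ) : ℝ) = (τ:ℝ) - 1 := by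
      rw [Nat.cast_sub hτ]; norm_num
    rw [hcast] at h1
    rw [hA_def]; linarith
  have hloghi : ∀ τ : ℕ, 1 ≤ τ → Real.log (Ptail τ) ≤ B + ((τ:ℝ) - 1) * Real.log ρ := by
    intro τ hτ
    have hpw := pow_pos hρ0 (τ - 1)
    have h1 : Real.log (Ptail τ) ≤ Real.log (c₂ * ρ ^ (τ - 1) * (1 - ρ)⁻¹) :=
      Real.log_le_log (hPpos τ hτ) (hPhi τ hτ)
    rw [Real.log_mul (by positivity) (ne_of_gt hρinv), Real.log_mul (ne_of_gt hc2) (ne_of_gt hpw),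
      Real.log_pow] at h1
    have hcast : ((τ - 1 : ℕ) : ℝ) = (τ:ℝ) - 1 := by
      rw [Nat.cast_sub hτ]; norm_num
    rw [hcast] at h1
    rw [hB_def]; linarith
  -- squeeze
  have hbase : Filter.Tendsto (fun τ : ℕ => (τ:ℝ)⁻¹) Filter.atTop (nhds 0) :=
    tendsto_inv_atTop_nhds_zero_nat
  have hlim : ∀ C : ℝ, Filter.Tendsto (fun τ : ℕ => (τ:ℝ)⁻¹ * C + (1 - (τ:ℝ)⁻¹) * Real.log ρ)
      Filter.atTop (nhds (Real.log ρ)) := by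
    intro C
    have h1 : Filter.Tendsto (fun τ : ℕ => 1 - (τ:ℝ)⁻¹) Filter.atTop (nhds 1) := by
      simpa using
        (tendsto_const_nhds (x := (1:ℝ)) (f := (Filter.atTop : Filter ℕ))).sub hbase
    have h := (hbase.mul_const C).add (h1.mul_const (Real.log ρ))
    simpa using h
  apply tendsto_of_tendsto_of_tendsto_of_le_of_le' (hlim A) (hlim B)
  · filter_upwards [Filter.eventually_ge_atTop 1] with τ hτ
    have hτR : (1:ℝ) ≤ (τ:ℝ) := by exact_mod_cast hτ
    have hne : (τ:ℝ) ≠ 0 := by linarith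
    have h1 := mul_le_mul_of_nonneg_left (hloglo τ hτ) (inv_nonneg.mpr (by linarith : (0:ℝ) ≤ (τ:ℝ)))
    calc (τ:ℝ)⁻¹ * A + (1 - (τ:ℝ)⁻¹) * Real.log ρ
        = (τ:ℝ)⁻¹ * (A + ((τ:ℝ) - 1) * Real.log ρ) := by field_simp
      _ ≤ (τ:ℝ)⁻¹ * Real.log (Ptail τ) := h1
  · filter_upwards [Filter.eventually_ge_atTop 1] with τ hτ
    have hτR : (1:ℝ) ≤ (τ:ℝ) := by exact_mod_cast hτ
    have hne : (τ:ℝ) ≠ 0 := by linarith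
    have h1 := mul_le_mul_of_nonneg_left (hloghi τ hτ) (inv_nonneg.mpr (by linarith : (0:ℝ) ≤ (τ:ℝ)))
    calc (τ:ℝ)⁻¹ * Real.log (Ptail τ)
        ≤ (τ:ℝ)⁻¹ * (B + ((τ:ℝ) - 1) * Real.log ρ) := h1
      _ = (τ:ℝ)⁻¹ * B + (1 - (τ:ℝ)⁻¹) * Real.log ρ := by field_simp
end

section
/- Let A0, A1, A2 be 2×2 real matrices with nonnegative entries such that I − A1 is invertible and (I − A1)⁻¹ has nonnegative entries. Define the sequence of matrices R_0 = 0 and R_{j+1} = (A0 + R_j²·A2)·(I − A1)⁻¹. Then: (a) R_j ≤ R_{j+1} entrywise for every j ≥ 0; (b) if S is any 2×2 real matrix with nonnegative entries satisfying S = (A0 + S²·A2)·(I − A1)⁻¹, then R_j ≤ S entrywise for every j ≥ 0; (c) consequently, if such a matrix S exists, the sequence R_j converges entrywise to a limit R with nonnegative entries, and R is the minimal nonnegative solution of the equation R = (A0 + R²·A2)·(I − A1)⁻¹, i.e., R satisfies the equation and R ≤ S entrywise for every nonnegative solution S. -/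
open Matrix

private lemma stmt5_mulNN (X Y : Matrix (Fin 2) (Fin 2) ℝ)
    (hX : ∀ i j, 0 ≤ X i j) (hY : ∀ i j, 0 ≤ Y i j) : ∀ i j, 0 ≤ (X * Y) i j := by
  intro i j
  rw [Matrix.mul_apply]
  exact Finset.sum_nonneg fun l _ => mul_nonneg (hX i l) (hY l j)

private lemma stmt5_mulMono (X X' Y Y' : Matrix (Fin 2) (Fin 2) ℝ)
    (hX : ∀ i j, 0 ≤ X i j) (hY : ∀ i j, 0 ≤ Y i j)
    (hXX : ∀ i j, X i j ≤ X' i j) (hYY : ∀ i j, Y i j ≤ Y' i j) :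
    ∀ i j, (X * Y) i j ≤ (X' * Y') i j := by
  intro i j
  rw [Matrix.mul_apply, Matrix.mul_apply]
  refine Finset.sum_le_sum fun l _ => ?_
  exact mul_le_mul (hXX i l) (hYY l j) (hY l j) (le_trans (hX i l) (hXX i l))

theorem stmt5
    (A0 A1 A2 : Matrix (Fin 2) (Fin 2) ℝ)
    (hA0 : ∀ i j, 0 ≤ A0 i j) (hA1 : ∀ i j, 0 ≤ A1 i j) (hA2 : ∀ i j, 0 ≤ A2 i j)
    (hinv : IsUnit (1 - A1))
    (hinvnn : ∀ i j, 0 ≤ (1 - A1)⁻¹ i j)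
    (R : ℕ → Matrix (Fin 2) (Fin 2) ℝ)
    (hR0 : R 0 = 0)
    (hRrec : ∀ j : ℕ, R (j + 1) = (A0 + (R j) ^ 2 * A2) * (1 - A1)⁻¹) :
    -- (a) the sequence is entrywise nondecreasing
    (∀ j : ℕ, ∀ i k, R j i k ≤ R (j + 1) i k) ∧
    -- (b) every iterate is entrywise below any nonnegative solution S
    (∀ S : Matrix (Fin 2) (Fin 2) ℝ, (∀ i k, 0 ≤ S i k) →
      S = (A0 + S ^ 2 * A2) * (1 - A1)⁻¹ → ∀ j : ℕ, ∀ i k, R j i k ≤ S i k) ∧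
    -- (c) if a nonnegative solution exists, the iterates converge entrywise to the
    -- minimal nonnegative solution
    ((∃ S : Matrix (Fin 2) (Fin 2) ℝ, (∀ i k, 0 ≤ S i k) ∧
        S = (A0 + S ^ 2 * A2) * (1 - A1)⁻¹) →
      ∃ Rlim : Matrix (Fin 2) (Fin 2) ℝ,
        (∀ i k, Filter.Tendsto (fun j => R j i k) Filter.atTop (nhds (Rlim i k))) ∧
        (∀ i k, 0 ≤ Rlim i k) ∧
        Rlim = (A0 + Rlim ^ 2 * A2) * (1 - A1)⁻¹ ∧
        (∀ S : Matrix (Fin 2) (Fin 2) ℝ, (∀ i k, 0 ≤ S i k) →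
          S = (A0 + S ^ 2 * A2) * (1 - A1)⁻¹ → ∀ i k, Rlim i k ≤ S i k)) := by
  set F : Matrix (Fin 2) (Fin 2) ℝ → Matrix (Fin 2) (Fin 2) ℝ :=
    fun X => (A0 + X ^ 2 * A2) * (1 - A1)⁻¹ with hF
  have hFnn : ∀ X, (∀ i j, 0 ≤ X i j) → ∀ i j, 0 ≤ F X i j := by
    intro X hX
    refine stmt5_mulNN _ _ (fun i j => add_nonneg (hA0 i j) ?_) hinvnn
    have : X ^ 2 = X * X := sq X
    rw [this]
    exact stmt5_mulNN _ _ (stmt5_mulNN _ _ hX hX) hA2 i j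
  have hFmono : ∀ X Y, (∀ i j, 0 ≤ X i j) → (∀ i j, X i j ≤ Y i j) →
      ∀ i j, F X i j ≤ F Y i j := by
    intro X Y hX hXY
    have hXXnn := stmt5_mulNN _ _ hX hX
    have hXYsq := stmt5_mulMono X Y X Y hX hX hXY hXY
    have hMnn : ∀ i j, 0 ≤ (A0 + X * X * A2) i j := fun i j =>
      add_nonneg (hA0 i j) (stmt5_mulNN _ _ hXXnn hA2 i j)
    have hMle : ∀ i j, (A0 + X * X * A2) i j ≤ (A0 + Y * Y * A2) i j := fun i j =>
      add_le_add le_rfl (stmt5_mulMono _ _ _ _ hXXnn hA2 hXYsq (fun _ _ => le_rfl) i j)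
    simp only [hF, sq]
    exact stmt5_mulMono _ _ _ _ hMnn hinvnn hMle (fun _ _ => le_rfl)
  have hNN : ∀ j, ∀ i k, 0 ≤ R j i k := by
    intro j
    induction j with
    | zero => intro i k; rw [hR0]; exact le_rfl
    | succ n ih => rw [hRrec n]; exact hFnn (R n) ih
  have ha : ∀ j : ℕ, ∀ i k, R j i k ≤ R (j + 1) i k := by
    intro j
    induction j with
    | zero => intro i k; rw [hR0]; exact hNN 1 i k
    | succ n ih =>
      rw [hRrec n, hRrec (n + 1)]
      exact hFmono (R n) (R (n + 1)) (hNN n) ih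
  have hb : ∀ S : Matrix (Fin 2) (Fin 2) ℝ, (∀ i k, 0 ≤ S i k) →
      S = (A0 + S ^ 2 * A2) * (1 - A1)⁻¹ → ∀ j : ℕ, ∀ i k, R j i k ≤ S i k := by
    intro S hS hSeq j
    induction j with
    | zero => intro i k; rw [hR0]; exact hS i k
    | succ n ih =>
      intro i k
      rw [hRrec n]
      calc F (R n) i k ≤ F S i k := hFmono (R n) S (hNN n) ih i k
        _ = S i k := congrFun (congrFun hSeq.symm i) k
  refine ⟨ha, hb, ?_⟩
  rintro ⟨S, hS, hSeq⟩
  have hbdd : ∀ i k, BddAbove (Set.range fun j => R j i k) := by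
    intro i k
    exact ⟨S i k, by rintro x ⟨j, rfl⟩; exact hb S hS hSeq j i k⟩
  have hmono : ∀ i k, Monotone fun j => R j i k := fun i k =>
    monotone_nat_of_le_succ fun j => ha j i k
  set Rlim : Matrix (Fin 2) (Fin 2) ℝ := fun i k => ⨆ j, R j i k with hRlim
  have htendE : ∀ i k, Filter.Tendsto (fun j => R j i k) Filter.atTop (nhds (Rlim i k)) :=
    fun i k => tendsto_atTop_ciSup (hmono i k) (hbdd i k)
  have htend : Filter.Tendsto R Filter.atTop (nhds Rlim) := by
    refine tendsto_pi_nhds.mpr ?_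
    intro i
    rw [tendsto_pi_nhds]
    intro k
    exact htendE i k
  have hFc : Continuous F := by
    have h1 : Continuous fun X : Matrix (Fin 2) (Fin 2) ℝ => X := continuous_id
    have h2 : Continuous fun X : Matrix (Fin 2) (Fin 2) ℝ => X ^ 2 * A2 := by
      simp only [sq]
      exact (h1.matrix_mul h1).matrix_mul continuous_const
    exact (continuous_const.add h2).matrix_mul continuous_const
  have hkey : Rlim = F Rlim := by
    have h1 : Filter.Tendsto (fun j => R (j + 1)) Filter.atTop (nhds Rlim) :=
      htend.comp (Filter.tendsto_add_atTop_nat 1)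
    have h2 : Filter.Tendsto (fun j => F (R j)) Filter.atTop (nhds (F Rlim)) :=
      (hFc.tendsto Rlim).comp htend
    have heq : (fun j => R (j + 1)) = fun j => F (R j) := funext fun j => hRrec j
    rw [heq] at h1
    exact tendsto_nhds_unique h1 h2
  refine ⟨Rlim, htendE, ?_, hkey, ?_⟩
  · intro i k
    have := le_ciSup (hbdd i k) 0
    rw [hR0] at this
    simpa using this
  · intro S' hS' hS'eq i k
    exact ciSup_le fun j => hb S' hS' hS'eq j i k
end

section
/- Let n, p be natural numbers and let E ⊆ {0,…,n−1} be a fixed set of coordinates with |E| = e. For a matrix H chosen uniformly at random from all p×n matrices over GF(2), the probability that the family of columns of H indexed by E is linearly dependent over GF(2) equals P_f(p,e) = 1 − ∏_{i=0}^{e−1} (1 − 2^{i−p}). -/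
open Matrix

lemma count_indep (p n e : ℕ) (E : Finset (Fin n)) (hE : E.card = e) (he : e ≤ p) :
    Nat.card {H : Matrix (Fin p) (Fin n) (ZMod 2) //
        LinearIndependent (ZMod 2) (fun i : E => fun r => H r (i : Fin n))} =
      2 ^ (p * (n - e)) * ∏ i ∈ Finset.range e, (2 ^ p - 2 ^ i) := by
  classical
  set V := Fin p → ZMod 2 with hV
  let t : Matrix (Fin p) (Fin n) (ZMod 2) ≃ (Fin n → V) :=
    ⟨Matrix.transpose, Matrix.transpose, fun _ => rfl, fun _ => rfl⟩
  let split : (Fin n → V) ≃ (({i : Fin n // i ∈ E} → V) × ({i : Fin n // ¬ i ∈ E} → V)) :=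
    Equiv.piEquivPiSubtypeProd (fun i => i ∈ E) (fun _ => V)
  let eE : {i : Fin n // i ∈ E} ≃ Fin e := E.equivFinOfCardEq hE
  let P : ({i : Fin n // i ∈ E} → V) → Prop := fun g => LinearIndependent (ZMod 2) g
  have eA : {H : Matrix (Fin p) (Fin n) (ZMod 2) //
        LinearIndependent (ZMod 2) (fun i : E => fun r => H r (i : Fin n))} ≃
      {s : (({i : Fin n // i ∈ E} → V) × ({i : Fin n // ¬ i ∈ E} → V)) // P s.1} :=
    (t.trans split).subtypeEquiv (fun H => Iff.rfl)
  have eB : {s : (({i : Fin n // i ∈ E} → V) × ({i : Fin n // ¬ i ∈ E} → V)) // P s.1} ≃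
      ({g : {i : Fin n // i ∈ E} → V // P g} × ({i : Fin n // ¬ i ∈ E} → V)) :=
    Equiv.prodSubtypeFstEquivSubtypeProd
  have eC : {g : {i : Fin n // i ∈ E} → V // P g} ≃
      {s : Fin e → V // LinearIndependent (ZMod 2) s} :=
    Equiv.subtypeEquiv (Equiv.arrowCongr eE (Equiv.refl V))
      (fun g => (linearIndependent_equiv eE.symm (f := g)).symm)
  rw [Nat.card_congr ((eA.trans eB).trans (eC.prodCongr (Equiv.refl _))), Nat.card_prod, mul_comm]
  congr 1
  · rw [Nat.card_eq_fintype_card, Fintype.card_fun]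
    have h1 : Fintype.card {i : Fin n // ¬ i ∈ E} = n - e := by
      rw [Fintype.card_subtype_compl]
      simp [hE]
    have h2 : Fintype.card V = 2 ^ p := by simp [hV, ZMod.card]
    rw [h1, h2, ← pow_mul]
  · have hfr : Module.finrank (ZMod 2) V = p := by
      show Module.finrank (ZMod 2) (Fin p → ZMod 2) = p
      simp [Module.finrank_fintype_fun_eq_card]
    rw [card_linearIndependent (K := ZMod 2) (V := V) (le_of_le_of_eq he hfr.symm),
      Finset.prod_range fun i => 2 ^ p - 2 ^ i]
    congr 1; simp [hfr, ZMod.card]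

theorem stmt10 (p n e : ℕ) (E : Finset (Fin n)) (hE : E.card = e) :
    (Nat.card {H : Matrix (Fin p) (Fin n) (ZMod 2) //
        ¬ LinearIndependent (ZMod 2) (fun i : E => fun r => H r (i : Fin n))} : ℝ) /
      2 ^ (p * n) =
    1 - ∏ i ∈ Finset.range e, (1 - (2 : ℝ) ^ ((i : ℤ) - (p : ℤ))) := by
  classical
  have hen : e ≤ n := by
    calc e = E.card := hE.symm
    _ ≤ (Finset.univ : Finset (Fin n)).card := Finset.card_le_card (Finset.subset_univ E)
    _ = n := by simp
  have hEcard : Fintype.card E = e := by simp [hE]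
  have htot : Fintype.card (Matrix (Fin p) (Fin n) (ZMod 2)) = 2 ^ (p * n) := by
    have : Fintype.card (Matrix (Fin p) (Fin n) (ZMod 2)) =
        Fintype.card (Fin p → Fin n → ZMod 2) := rfl
    rw [this]
    simp [Fintype.card_fun, ZMod.card, ← pow_mul, Nat.mul_comm]
  have hcompl : Nat.card {H : Matrix (Fin p) (Fin n) (ZMod 2) //
        ¬ LinearIndependent (ZMod 2) (fun i : E => fun r => H r (i : Fin n))} =
      2 ^ (p * n) - Nat.card {H : Matrix (Fin p) (Fin n) (ZMod 2) //
        LinearIndependent (ZMod 2) (fun i : E => fun r => H r (i : Fin n))} := by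
    rw [Nat.card_eq_fintype_card, Nat.card_eq_fintype_card, Fintype.card_subtype_compl, htot]
  by_cases he : e ≤ p
  · have hK := count_indep p n e E hE he
    have hle : Nat.card {H : Matrix (Fin p) (Fin n) (ZMod 2) //
        LinearIndependent (ZMod 2) (fun i : E => fun r => H r (i : Fin n))} ≤ 2 ^ (p * n) := by
      rw [Nat.card_eq_fintype_card, ← htot]; exact Fintype.card_subtype_le _
    rw [hcompl, Nat.cast_sub (hK ▸ hle)]
    rw [hK]
    have hcast : ((2 ^ (p * (n - e)) * ∏ i ∈ Finset.range e, (2 ^ p - 2 ^ i) : ℕ) : ℝ) =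
        2 ^ (p * (n - e)) * ∏ i ∈ Finset.range e, ((2 : ℝ) ^ p - 2 ^ i) := by
      push_cast
      congr 1
      refine Finset.prod_congr rfl fun i hi => ?_
      rw [Nat.cast_sub (Nat.pow_le_pow_right (by norm_num)
        (le_of_lt (lt_of_lt_of_le (Finset.mem_range.1 hi) he)))]
      push_cast; ring
    rw [hcast]
    have hprod : ∏ i ∈ Finset.range e, (1 - (2 : ℝ) ^ ((i : ℤ) - (p : ℤ))) =
        (∏ i ∈ Finset.range e, ((2 : ℝ) ^ p - 2 ^ i)) / 2 ^ (p * e) := by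
      rw [eq_div_iff (by positivity)]
      rw [show (2 : ℝ) ^ (p * e) = ∏ _i ∈ Finset.range e, (2 : ℝ) ^ p by
        rw [Finset.prod_const, Finset.card_range, ← pow_mul]]
      rw [← Finset.prod_mul_distrib]
      refine Finset.prod_congr rfl fun i hi => ?_
      rw [zpow_sub₀ (by norm_num : (2:ℝ) ≠ 0), zpow_natCast, zpow_natCast]
      field_simp
    rw [hprod]
    have h2 : (2 : ℝ) ^ (p * n) = 2 ^ (p * (n - e)) * 2 ^ (p * e) := by
      rw [← pow_add, ← Nat.mul_add, Nat.sub_add_cancel hen]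
    rw [h2]
    have hpos1 : (0:ℝ) < 2 ^ (p * (n-e)) := by positivity
    have hpos2 : (0:ℝ) < 2 ^ (p * e) := by positivity
    push_cast
    field_simp
    rw [h2]
    ring
  · push_neg at he
    have hzero : Nat.card {H : Matrix (Fin p) (Fin n) (ZMod 2) //
        LinearIndependent (ZMod 2) (fun i : E => fun r => H r (i : Fin n))} = 0 := by
      rw [Nat.card_eq_zero]
      left
      rw [isEmpty_subtype]
      intro H hli
      have hcard : Fintype.card E ≤ Module.finrank (ZMod 2) (Fin p → ZMod 2) :=
        hli.fintype_card_le_finrank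
      rw [hEcard, Module.finrank_fintype_fun_eq_card, Fintype.card_fin] at hcard
      exact absurd hcard (Nat.not_le.2 he)
    rw [hcompl, hzero, Nat.sub_zero]
    have : ∏ i ∈ Finset.range e, (1 - (2 : ℝ) ^ ((i : ℤ) - (p : ℤ))) = 0 := by
      have hp0 : (1 - (2:ℝ) ^ ((p:ℤ) - (p:ℤ))) = 0 := by norm_num
      exact Finset.prod_eq_zero (Finset.mem_range.2 he) hp0
    rw [this, sub_zero]
    push_cast
    rw [div_self (by positivity)]
end
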